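/- arXiv:2111.07304 — 3 statements merged into one kernel-verified Lean document; each statement's English description precedes it below -/
import Mathlib

section
/- A lattice triangle is primitive if and only if it has area 1/2, in the following direction: if a, b, c are three affinely independent points of ℤ² ⊆ ℝ² and the closed triangle conv{a,b,c} contains no integer lattice point other than a, b and c, then the two-dimensional Lebesgue measure of conv{a,b,c} equals 1/2. -/
open MeasureTheory

lemma combo_mem_convexHull_triple {E : Type*} [AddCommGroup E] [Module ℝ E]
    {x y z : E} {p q r : ℝ} (hp : 0 ≤ p) (hq : 0 ≤ q) (hr : 0 ≤ r) (hpqr : p + q + r = 1) :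
    p • x + q • y + r • z ∈ convexHull ℝ ({x, y, z} : Set E) := by
  have h := Finset.centerMass_mem_convexHull (R := ℝ) (Finset.univ : Finset (Fin 3))
    (w := ![p, q, r]) (z := ![x, y, z]) (s := {x, y, z})
    (by intro i _; fin_cases i <;> simpa)
    (by simp [Fin.sum_univ_three, hpqr])
    (by intro i _; fin_cases i <;> simp)
  simp only [Finset.centerMass, Fin.sum_univ_three, Matrix.cons_val_zero, Matrix.cons_val_one, Matrix.head_cons, Matrix.cons_val_two, Matrix.tail_cons, hpqr, inv_one, one_smul] at h
  exact h
  -- need to simplify ![p,q,r] applications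

lemma stdTriangle_eq : convexHull ℝ ({(0,0),(1,0),(0,1)} : Set (ℝ×ℝ)) =
    {p : ℝ×ℝ | 0 ≤ p.1 ∧ 0 ≤ p.2 ∧ p.1 + p.2 ≤ 1} := by
  apply Set.Subset.antisymm
  · apply convexHull_min
    · rintro p (rfl|rfl|rfl) <;> norm_num
    · intro p hp q hq s t hs ht hst
      obtain ⟨h1, h2, h3⟩ := hp; obtain ⟨k1, k2, k3⟩ := hq
      refine ⟨?_, ?_, ?_⟩ <;> simp only [Set.mem_setOf_eq, Prod.fst_add, Prod.snd_add,
        Prod.smul_fst, Prod.smul_snd, smul_eq_mul] <;> nlinarith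
  · rintro ⟨x, y⟩ ⟨h1, h2, h3⟩
    have := combo_mem_convexHull_triple (x := ((0:ℝ),(0:ℝ))) (y := ((1:ℝ),(0:ℝ)))
      (z := ((0:ℝ),(1:ℝ))) (p := 1 - x - y) (q := x) (r := y)
      (by linarith) h1 h2 (by ring)
    convert this using 1
    simp [Prod.ext_iff]

lemma volume_stdTriangleSet :
    volume {p : ℝ×ℝ | 0 ≤ p.1 ∧ 0 ≤ p.2 ∧ p.1 + p.2 ≤ 1} = ENNReal.ofReal (1/2) := by
  have hreg : volume (regionBetween (fun _ => (0:ℝ)) (fun x => 1 - x) (Set.Icc 0 1))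
      = ENNReal.ofReal (1/2) := by
    rw [Measure.volume_eq_prod, volume_regionBetween_eq_integral]
    · congr 1
      rw [MeasureTheory.integral_Icc_eq_integral_Ioc, ← intervalIntegral.integral_of_le zero_le_one]
      simp only [Pi.sub_apply, sub_zero]
      rw [intervalIntegral.integral_sub intervalIntegrable_const (intervalIntegral.intervalIntegrable_id)]
      simp
      norm_num
    · exact continuous_const.integrableOn_Icc
    · exact (continuous_const.sub continuous_id).integrableOn_Icc
    · exact measurableSet_Icc
    · intro x hx; simp at hx ⊢; linarith [hx.2]
  have hL0 : volume {p : ℝ×ℝ | p.2 = 0} = 0 := by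
    have h : {p : ℝ×ℝ | p.2 = 0} = Set.univ ×ˢ ({0} : Set ℝ) := by
      ext p
      simp only [Set.mem_setOf_eq, Set.mem_prod, Set.mem_univ, Set.mem_singleton_iff, true_and]
    rw [h, Measure.volume_eq_prod, Measure.prod_prod]
    simp
  have hL1 : volume {p : ℝ×ℝ | p.1 + p.2 = 1} = 0 := by
    have hm : MeasurableSet {p : ℝ×ℝ | p.1 + p.2 = 1} :=
      (isClosed_eq (by fun_prop) continuous_const).measurableSet
    rw [Measure.volume_eq_prod, Measure.prod_apply hm]
    have h : ∀ x : ℝ, Prod.mk x ⁻¹' {p : ℝ×ℝ | p.1 + p.2 = 1} = {1 - x} := by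
      intro x; ext y
      simp only [Set.mem_preimage, Set.mem_setOf_eq, Set.mem_singleton_iff]
      constructor <;> intro h <;> linarith
    simp [h]
  apply le_antisymm
  · have hsub : {p : ℝ×ℝ | 0 ≤ p.1 ∧ 0 ≤ p.2 ∧ p.1 + p.2 ≤ 1} ⊆
        regionBetween (fun _ => (0:ℝ)) (fun x => 1 - x) (Set.Icc 0 1)
          ∪ ({p : ℝ×ℝ | p.2 = 0} ∪ {p : ℝ×ℝ | p.1 + p.2 = 1}) := by
      rintro ⟨x, y⟩ ⟨h1, h2, h3⟩
      by_cases hy : y = 0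
      · exact Or.inr (Or.inl hy)
      by_cases hxy : x + y = 1
      · exact Or.inr (Or.inr hxy)
      · left
        refine ⟨⟨h1, by linarith⟩, lt_of_le_of_ne h2 (Ne.symm hy), ?_⟩
        simp only
        have : x + y < 1 := lt_of_le_of_ne h3 hxy
        linarith
    calc volume {p : ℝ×ℝ | 0 ≤ p.1 ∧ 0 ≤ p.2 ∧ p.1 + p.2 ≤ 1}
        ≤ volume (regionBetween (fun _ => (0:ℝ)) (fun x => 1 - x) (Set.Icc 0 1)
          ∪ ({p : ℝ×ℝ | p.2 = 0} ∪ {p : ℝ×ℝ | p.1 + p.2 = 1})) := measure_mono hsub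
      _ ≤ volume (regionBetween (fun _ => (0:ℝ)) (fun x => 1 - x) (Set.Icc 0 1))
          + volume ({p : ℝ×ℝ | p.2 = 0} ∪ {p : ℝ×ℝ | p.1 + p.2 = 1}) := measure_union_le _ _
      _ ≤ volume (regionBetween (fun _ => (0:ℝ)) (fun x => 1 - x) (Set.Icc 0 1))
          + (volume {p : ℝ×ℝ | p.2 = 0} + volume {p : ℝ×ℝ | p.1 + p.2 = 1}) :=
            add_le_add le_rfl (measure_union_le _ _)
      _ = ENNReal.ofReal (1/2) := by rw [hreg, hL0, hL1]; simp
  · rw [← hreg]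
    apply measure_mono
    rintro ⟨x, y⟩ ⟨hx, hy⟩
    simp only [Set.mem_Icc] at hx
    simp only [Set.mem_Ioo] at hy
    exact ⟨hx.1, le_of_lt hy.1, by linarith [hy.2]⟩

lemma volume_triangle (A u v : ℝ × ℝ) :
    volume (convexHull ℝ ({A, A + u, A + v} : Set (ℝ×ℝ)))
      = ENNReal.ofReal |u.1 * v.2 - u.2 * v.1| * ENNReal.ofReal (1/2) := by
  set T := Matrix.toLin (Module.Basis.finTwoProd ℝ) (Module.Basis.finTwoProd ℝ) !![u.1, v.1; u.2, v.2] with hT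
  have hdet : LinearMap.det T = u.1 * v.2 - u.2 * v.1 := by
    rw [hT, LinearMap.det_toLin]
    simp [Matrix.det_fin_two]; ring
  have himgpts : T '' {((0:ℝ),(0:ℝ)), (1,0), (0,1)} = {0, u, v} := by
    simp only [Set.image_insert_eq, Set.image_singleton, hT, Matrix.toLin_finTwoProd_apply]
    norm_num
    rfl
  have h2 : (fun x => A + x) '' convexHull ℝ ({0, u, v} : Set (ℝ×ℝ))
      = convexHull ℝ ((fun x => A + x) '' {0, u, v}) := by
    have := ((AffineEquiv.constVAdd ℝ (ℝ×ℝ) A).toAffineMap).image_convexHull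
      ({0, u, v} : Set (ℝ×ℝ))
    simpa [vadd_eq_add] using this
  have h3 : (fun x => A + x) '' ({0, u, v} : Set (ℝ×ℝ)) = {A, A + u, A + v} := by
    simp [Set.image_insert_eq]
  have himg : convexHull ℝ ({A, A+u, A+v} : Set (ℝ×ℝ))
      = (fun x => A + x) '' (T '' convexHull ℝ {(0,0),(1,0),(0,1)}) := by
    rw [LinearMap.image_convexHull, himgpts, h2, h3]
  rw [himg, Set.image_add_left, measure_preimage_add, Measure.addHaar_image_linearMap,
    hdet, stdTriangle_eq, volume_stdTriangleSet]

lemma exists_frac_point (u v : ℤ × ℤ) (hd : u.1 * v.2 - u.2 * v.1 ≠ 0)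
    (hne : ¬(u.1 * v.2 - u.2 * v.1 = 1 ∨ u.1 * v.2 - u.2 * v.1 = -1)) :
    ∃ (p : ℤ × ℤ) (α β : ℝ), 0 ≤ α ∧ 0 ≤ β ∧ α < 1 ∧ β < 1 ∧ ¬(α = 0 ∧ β = 0) ∧
      (p.1 : ℝ) = α * u.1 + β * v.1 ∧ (p.2 : ℝ) = α * u.2 + β * v.2 := by
  set d : ℤ := u.1 * v.2 - u.2 * v.1 with hd_def
  -- find w not in the integer span of u, v
  have hw : ∃ w : ℤ × ℤ, ¬∃ m n : ℤ, w.1 = m * u.1 + n * v.1 ∧ w.2 = m * u.2 + n * v.2 := by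
    by_contra h
    push_neg at h
    obtain ⟨m, n, h1, h2⟩ := h (1, 0)
    obtain ⟨m', n', h3, h4⟩ := h (0, 1)
    simp only at h1 h2 h3 h4
    have key : (m * n' - n * m') * d = 1 := by
      rw [hd_def]; linear_combination (-(m' * u.2 + n' * v.2)) * h1 +
        (m' * u.1 + n' * v.1) * h2 + (-1 : ℤ) * h4
    have : IsUnit d := IsUnit.of_mul_eq_one (m * n' - n * m') (by rw [mul_comm]; exact key)
    exact hne (Int.isUnit_iff.mp this)
  obtain ⟨w, hw⟩ := hw
  -- Cramer coefficients
  set N1 : ℤ := w.1 * v.2 - w.2 * v.1 with hN1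
  set N2 : ℤ := u.1 * w.2 - u.2 * w.1 with hN2
  have cram1 : N1 * u.1 + N2 * v.1 = d * w.1 := by rw [hN1, hN2, hd_def]; ring
  have cram2 : N1 * u.2 + N2 * v.2 = d * w.2 := by rw [hN1, hN2, hd_def]; ring
  -- normalize sign
  set D : ℤ := if 0 < d then d else -d with hDdef
  set M1 : ℤ := if 0 < d then N1 else -N1 with hM1def
  set M2 : ℤ := if 0 < d then N2 else -N2 with hM2def
  have hD : 0 < D := by
    rw [hDdef]
    rcases lt_or_gt_of_ne hd with h | h
    · rw [if_neg (by omega)]; omega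
    · rw [if_pos h]; exact h
  have c1 : M1 * u.1 + M2 * v.1 = D * w.1 := by
    by_cases h : 0 < d <;> simp [hDdef, hM1def, hM2def, h] <;> linarith [cram1]
  have c2 : M1 * u.2 + M2 * v.2 = D * w.2 := by
    by_cases h : 0 < d <;> simp [hDdef, hM1def, hM2def, h] <;> linarith [cram2]
  set r1 : ℤ := M1 % D with hr1
  set r2 : ℤ := M2 % D with hr2
  set q1 : ℤ := M1 / D with hq1
  set q2 : ℤ := M2 / D with hq2
  have e1 : D * q1 + r1 = M1 := Int.mul_ediv_add_emod M1 D
  have e2 : D * q2 + r2 = M2 := Int.mul_ediv_add_emod M2 D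
  have hr1n : 0 ≤ r1 := Int.emod_nonneg M1 hD.ne'
  have hr2n : 0 ≤ r2 := Int.emod_nonneg M2 hD.ne'
  have hr1l : r1 < D := Int.emod_lt_of_pos M1 hD
  have hr2l : r2 < D := Int.emod_lt_of_pos M2 hD
  refine ⟨(w.1 - q1 * u.1 - q2 * v.1, w.2 - q1 * u.2 - q2 * v.2),
    (r1 : ℝ) / (D : ℝ), (r2 : ℝ) / (D : ℝ), ?_, ?_, ?_, ?_, ?_, ?_, ?_⟩
  · positivity
  · positivity
  · rw [div_lt_one (by exact_mod_cast hD)]; exact_mod_cast hr1l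
  · rw [div_lt_one (by exact_mod_cast hD)]; exact_mod_cast hr2l
  · rintro ⟨h1, h2⟩
    have hDne : (D : ℝ) ≠ 0 := by exact_mod_cast hD.ne'
    have hr10 : r1 = 0 := by
      have := (div_eq_zero_iff.mp h1).resolve_right hDne
      exact_mod_cast this
    have hr20 : r2 = 0 := by
      have := (div_eq_zero_iff.mp h2).resolve_right hDne
      exact_mod_cast this
    apply hw
    refine ⟨q1, q2, ?_, ?_⟩
    · have : D * w.1 = D * (q1 * u.1 + q2 * v.1) := by
        rw [← c1, ← e1, ← e2, hr10, hr20]; ring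
      exact mul_left_cancel₀ hD.ne' this
    · have : D * w.2 = D * (q1 * u.2 + q2 * v.2) := by
        rw [← c1] at *
        rw [← c2, ← e1, ← e2, hr10, hr20]; ring
      exact mul_left_cancel₀ hD.ne' this
  · have hDne : (D : ℝ) ≠ 0 := by exact_mod_cast hD.ne'
    have key : (D : ℝ) * (w.1 - q1 * u.1 - q2 * v.1) = r1 * u.1 + r2 * v.1 := by
      have : D * (w.1 - q1 * u.1 - q2 * v.1) = r1 * u.1 + r2 * v.1 := by
        rw [← e1, ← e2] at c1; linarith [c1]
      exact_mod_cast congrArg (Int.cast : ℤ → ℝ) this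
    field_simp
    push_cast
    push_cast at key
    linarith [key]
  · have hDne : (D : ℝ) ≠ 0 := by exact_mod_cast hD.ne'
    have key : (D : ℝ) * (w.2 - q1 * u.2 - q2 * v.2) = r1 * u.2 + r2 * v.2 := by
      have : D * (w.2 - q1 * u.2 - q2 * v.2) = r1 * u.2 + r2 * v.2 := by
        rw [← e1, ← e2] at c2; linarith [c2]
      exact_mod_cast congrArg (Int.cast : ℤ → ℝ) this
    field_simp
    push_cast
    push_cast at key
    linarith [key]

lemma det_ne_zero_of_affineIndependent {A B C : ℝ × ℝ}
    (h : AffineIndependent ℝ ![A, B, C]) :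
    (B.1 - A.1) * (C.2 - A.2) - (B.2 - A.2) * (C.1 - A.1) ≠ 0 := by
  intro h0
  rw [affineIndependent_iff_not_collinear] at h
  apply h
  have hrange : Set.range ![A, B, C] = {A, B, C} := by
    ext p; simp; tauto
  rw [hrange]
  rw [collinear_iff_of_mem (Set.mem_insert A _)]
  set U : ℝ × ℝ := B - A with hU
  set V : ℝ × ℝ := C - A with hV
  by_cases hUz : U = 0
  · refine ⟨V, ?_⟩
    rintro p (hp | hp | hp)
    · exact ⟨0, by simp [hp]⟩
    · exact ⟨0, by simp [hp, show B = A from by rw [← sub_eq_zero]; exact hUz]⟩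
    · rw [Set.mem_singleton_iff] at hp
      exact ⟨1, by simp [hp, hV]⟩
  · refine ⟨U, ?_⟩
    rintro p (hp | hp | hp)
    · exact ⟨0, by simp [hp]⟩
    · exact ⟨1, by simp [hp, hU]⟩
    · rw [Set.mem_singleton_iff] at hp
      by_cases h1 : U.1 ≠ 0
      · refine ⟨V.1 / U.1, ?_⟩
        have hc : V.1 * U.2 = V.2 * U.1 := by
          simp only [hU, hV, Prod.fst_sub, Prod.snd_sub]; nlinarith [h0]
        have : (V.1 / U.1) • U = V := by
          rw [Prod.ext_iff, Prod.smul_fst, Prod.smul_snd, smul_eq_mul, smul_eq_mul]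
          constructor <;> field_simp
          linarith [hc]
        rw [this]; simp [hp, hV]
      · push_neg at h1
        have h2 : U.2 ≠ 0 := by
          intro h2; exact hUz (Prod.ext h1 h2)
        refine ⟨V.2 / U.2, ?_⟩
        have hc : V.1 * U.2 = V.2 * U.1 := by
          simp only [hU, hV, Prod.fst_sub, Prod.snd_sub]; nlinarith [h0]
        have : (V.2 / U.2) • U = V := by
          rw [Prod.ext_iff, Prod.smul_fst, Prod.smul_snd, smul_eq_mul, smul_eq_mul]
          constructor <;> field_simp
          · rw [h1] at hc ⊢; rw [mul_comm]; simpa [or_comm] using hc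
        rw [this]; simp [hp, hV]

/-- A point of `ℝ × ℝ` is an integer lattice point if both coordinates are integers. -/
def IsLatticePoint (p : ℝ × ℝ) : Prop := ∃ a b : ℤ, p = ((a : ℝ), (b : ℝ))

/-- The embedding of `ℤ × ℤ` into `ℝ × ℝ`. -/
def latticeEmbed (p : ℤ × ℤ) : ℝ × ℝ := ((p.1 : ℝ), (p.2 : ℝ))

/-- A primitive lattice triangle has area `1/2`. -/
theorem primitive_lattice_triangle_area (a b c : ℤ × ℤ)
    (hindep : AffineIndependent ℝ ![latticeEmbed a, latticeEmbed b, latticeEmbed c])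
    (hprim : ∀ p : ℝ × ℝ, IsLatticePoint p →
      p ∈ convexHull ℝ ({latticeEmbed a, latticeEmbed b, latticeEmbed c} : Set (ℝ × ℝ)) →
      p = latticeEmbed a ∨ p = latticeEmbed b ∨ p = latticeEmbed c) :
    (volume (convexHull ℝ ({latticeEmbed a, latticeEmbed b, latticeEmbed c} : Set (ℝ × ℝ)))).toReal
      = 1 / 2 := by
  set A := latticeEmbed a with hA
  set B := latticeEmbed b with hB
  set C := latticeEmbed c with hC
  set u : ℤ × ℤ := (b.1 - a.1, b.2 - a.2) with hu
  set v : ℤ × ℤ := (c.1 - a.1, c.2 - a.2) with hv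
  set d : ℤ := u.1 * v.2 - u.2 * v.1 with hd_def
  have hdR : ((d : ℤ) : ℝ) = (B.1 - A.1) * (C.2 - A.2) - (B.2 - A.2) * (C.1 - A.1) := by
    simp only [hA, hB, hC, latticeEmbed, hd_def, hu, hv]
    push_cast
    ring
  have hd0 : d ≠ 0 := by
    intro h
    apply det_ne_zero_of_affineIndependent hindep
    rw [← hdR, h]
    simp
  have hdRne : ((d : ℤ) : ℝ) ≠ 0 := Int.cast_ne_zero.mpr hd0
  have hind : ∀ s t : ℝ, s * (u.1 : ℝ) + t * (v.1 : ℝ) = 0 →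
      s * (u.2 : ℝ) + t * (v.2 : ℝ) = 0 → s = 0 ∧ t = 0 := by
    intro s t h1 h2
    have h1' := h1
    have h2' := h2
    simp only [hu, hv] at h1' h2'
    push_cast at h1' h2'
    have hs : s * ((d : ℤ) : ℝ) = 0 := by
      rw [hd_def]; simp only [hu, hv]; push_cast
      linear_combination ((c.2 : ℝ) - (a.2 : ℝ)) * h1' - ((c.1 : ℝ) - (a.1 : ℝ)) * h2'
    have ht : t * ((d : ℤ) : ℝ) = 0 := by
      rw [hd_def]; simp only [hu, hv]; push_cast
      linear_combination ((b.1 : ℝ) - (a.1 : ℝ)) * h2' - ((b.2 : ℝ) - (a.2 : ℝ)) * h1'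
    exact ⟨(mul_eq_zero.mp hs).resolve_right hdRne,
      (mul_eq_zero.mp ht).resolve_right hdRne⟩
  -- key step: no lattice point strictly inside (in the appropriate sense)
  have key : ∀ (s t : ℝ) (q : ℤ × ℤ), 0 ≤ s → 0 ≤ t → s + t ≤ 1 → s < 1 → t < 1 →
      ¬(s = 0 ∧ t = 0) → ((q.1 : ℝ) = (a.1 : ℝ) + s * (u.1 : ℝ) + t * (v.1 : ℝ)) →
      ((q.2 : ℝ) = (a.2 : ℝ) + s * (u.2 : ℝ) + t * (v.2 : ℝ)) → False := by
    intro s t q hs0 ht0 hst hs1 ht1 hne00 hq1 hq2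
    have hlat : IsLatticePoint (latticeEmbed q) := ⟨q.1, q.2, rfl⟩
    have heq : latticeEmbed q = (1 - s - t) • A + s • B + t • C := by
      simp only [latticeEmbed, hA, hB, hC, Prod.ext_iff, Prod.fst_add, Prod.snd_add,
        Prod.smul_fst, Prod.smul_snd, smul_eq_mul]
      constructor
      · rw [hq1, hu, hv]; push_cast; ring
      · rw [hq2, hu, hv]; push_cast; ring
    have hmem : latticeEmbed q ∈ convexHull ℝ ({A, B, C} : Set (ℝ × ℝ)) := by
      rw [heq]
      exact combo_mem_convexHull_triple (by linarith) hs0 ht0 (by ring)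
    rcases hprim _ hlat hmem with h | h | h
    · have h1 : (q.1 : ℝ) = (a.1 : ℝ) := congrArg Prod.fst h
      have h2 : (q.2 : ℝ) = (a.2 : ℝ) := congrArg Prod.snd h
      exact hne00 (hind s t (by linarith [hq1, h1]) (by linarith [hq2, h2]))
    · have h1 : (q.1 : ℝ) = (b.1 : ℝ) := congrArg Prod.fst h
      have h2 : (q.2 : ℝ) = (b.2 : ℝ) := congrArg Prod.snd h
      have hb1 : (b.1 : ℝ) = (a.1 : ℝ) + (u.1 : ℝ) := by rw [hu]; push_cast; ring
      have hb2 : (b.2 : ℝ) = (a.2 : ℝ) + (u.2 : ℝ) := by rw [hu]; push_cast; ring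
      have := hind (s - 1) t (by rw [sub_mul]; linarith [hq1, h1, hb1])
        (by rw [sub_mul]; linarith [hq2, h2, hb2])
      linarith [this.1]
    · have h1 : (q.1 : ℝ) = (c.1 : ℝ) := congrArg Prod.fst h
      have h2 : (q.2 : ℝ) = (c.2 : ℝ) := congrArg Prod.snd h
      have hc1 : (c.1 : ℝ) = (a.1 : ℝ) + (v.1 : ℝ) := by rw [hv]; push_cast; ring
      have hc2 : (c.2 : ℝ) = (a.2 : ℝ) + (v.2 : ℝ) := by rw [hv]; push_cast; ring
      have := hind s (t - 1) (by rw [sub_mul]; linarith [hq1, h1, hc1])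
        (by rw [sub_mul]; linarith [hq2, h2, hc2])
      linarith [this.2]
  -- conclude |d| = 1
  have habs : d = 1 ∨ d = -1 := by
    by_contra hne
    obtain ⟨p, α, β, hα0, hβ0, hα1, hβ1, hne00, hp1, hp2⟩ := exists_frac_point u v hd0 hne
    rcases le_or_gt (α + β) 1 with hcase | hcase
    · exact key α β (a.1 + p.1, a.2 + p.2) hα0 hβ0 hcase hα1 hβ1 hne00
        (by push_cast; rw [hp1]; simp only [hu, hv]; push_cast; ring)
        (by push_cast; rw [hp2]; simp only [hu, hv]; push_cast; ring)
    · have hαpos : 0 < α := by linarith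
      have hβpos : 0 < β := by linarith
      exact key (1 - α) (1 - β) (a.1 + u.1 + v.1 - p.1, a.2 + u.2 + v.2 - p.2)
        (by linarith) (by linarith) (by linarith) (by linarith) (by linarith)
        (by rintro ⟨h1, h2⟩; linarith)
        (by push_cast; rw [hp1]; simp only [hu, hv]; push_cast; ring)
        (by push_cast; rw [hp2]; simp only [hu, hv]; push_cast; ring)
  -- compute the volume
  have hBeq : B = A + ((u.1 : ℝ), (u.2 : ℝ)) := by
    simp only [hA, hB, latticeEmbed, hu, Prod.mk_add_mk, Prod.ext_iff]
    push_cast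
    constructor <;> ring
  have hCeq : C = A + ((v.1 : ℝ), (v.2 : ℝ)) := by
    simp only [hA, hC, latticeEmbed, hv, Prod.mk_add_mk, Prod.ext_iff]
    push_cast
    constructor <;> ring
  rw [hBeq, hCeq, volume_triangle]
  have hdet1 : |((u.1 : ℝ), (u.2 : ℝ)).1 * ((v.1 : ℝ), (v.2 : ℝ)).2
      - ((u.1 : ℝ), (u.2 : ℝ)).2 * ((v.1 : ℝ), (v.2 : ℝ)).1| = 1 := by
    simp only
    have : (u.1 : ℝ) * (v.2 : ℝ) - (u.2 : ℝ) * (v.1 : ℝ) = ((d : ℤ) : ℝ) := by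
      rw [hd_def]; push_cast; ring
    rw [this]
    rcases habs with h | h <;> rw [h] <;> norm_num
  rw [hdet1]
  simp only [ENNReal.ofReal_one, one_mul]
  rw [ENNReal.toReal_ofReal (by norm_num)]
end

section
/- Upper bound of Theorem 2 (via Pick's theorem): Let P be a finite set of n points of the integer lattice ℤ² in the plane, not all collinear, and let K ⊆ ℝ² be the convex hull (over ℝ) of P. Let h_b(P) denote the number of integer lattice points not belonging to P that lie on the topological frontier of K, and let h_i(P) denote the number of integer lattice points not belonging to P that lie in the topological interior of K. Let M ⊆ ℝ² be a compact set with M ⊆ K such that every point of P lies on the topological frontier of M, and such that Pick's formula holds for M, i.e., the two-dimensional Lebesgue measure of M equals b(M)/2 + i(M) − 1, where b(M) is the number of integer lattice points on the frontier of M and i(M) is the number of integer lattice points in the interior of M. Then the two-dimensional Lebesgue measure of M is at most n/2 + h_b(P)/2 + h_i(P) − 1. -/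
open MeasureTheory

lemma latticeEmbed_injective : Function.Injective latticeEmbed := by
  rintro ⟨a, b⟩ ⟨c, d⟩ h
  simp only [latticeEmbed, Prod.mk.injEq, Int.cast_injective.eq_iff] at h
  exact Prod.ext h.1 h.2

lemma lattice_finite {s : Set (ℝ × ℝ)} (hs : Bornology.IsBounded s) :
    {p : ℝ × ℝ | IsLatticePoint p ∧ p ∈ s}.Finite := by
  obtain ⟨R, hR⟩ := hs.subset_closedBall 0
  apply Set.Finite.subset ((Set.finite_Icc ((-⌈R⌉, -⌈R⌉) : ℤ × ℤ) (⌈R⌉, ⌈R⌉)).image latticeEmbed)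
  rintro p ⟨⟨a, b, rfl⟩, hp⟩
  have hd := hR hp
  rw [Metric.mem_closedBall, Prod.dist_eq] at hd
  have h1 : |(a : ℝ)| ≤ R := by
    have := le_trans (le_max_left _ _) hd
    simpa [Real.dist_eq] using this
  have h2 : |(b : ℝ)| ≤ R := by
    have := le_trans (le_max_right _ _) hd
    simpa [Real.dist_eq] using this
  have hRc : R ≤ (⌈R⌉ : ℝ) := Int.le_ceil R
  rw [abs_le] at h1 h2
  refine ⟨(a, b), ?_, rfl⟩
  simp only [Set.mem_Icc, Prod.le_def]
  obtain ⟨h1l, h1r⟩ := h1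
  obtain ⟨h2l, h2r⟩ := h2
  refine ⟨⟨?_, ?_⟩, ?_, ?_⟩
  · exact_mod_cast (by push_cast; linarith : ((-⌈R⌉ : ℤ) : ℝ) ≤ (a : ℝ))
  · exact_mod_cast (by push_cast; linarith : ((-⌈R⌉ : ℤ) : ℝ) ≤ (b : ℝ))
  · exact_mod_cast (by linarith : (a : ℝ) ≤ ((⌈R⌉ : ℤ) : ℝ))
  · exact_mod_cast (by linarith : (b : ℝ) ≤ ((⌈R⌉ : ℤ) : ℝ))
/-- **Upper bound of Theorem 2 (via Pick's theorem).** -/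
theorem area_upper_bound_of_pick (P : Finset (ℤ × ℤ)) (n : ℕ) (hn : P.card = n)
    (hncol : ¬ Collinear ℝ (↑(P.image latticeEmbed) : Set (ℝ × ℝ)))
    (K : Set (ℝ × ℝ)) (hK : K = convexHull ℝ (↑(P.image latticeEmbed) : Set (ℝ × ℝ)))
    (M : Set (ℝ × ℝ)) (hMK : M ⊆ K) (hM : IsCompact M)
    (hPfr : ∀ p ∈ P, latticeEmbed p ∈ frontier M)
    (hpick : (volume M).toReal =
      ({p : ℝ × ℝ | IsLatticePoint p ∧ p ∈ frontier M}.ncard : ℝ) / 2 +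
      ({p : ℝ × ℝ | IsLatticePoint p ∧ p ∈ interior M}.ncard : ℝ) - 1) :
    (volume M).toReal ≤ (n : ℝ) / 2 +
      ({p : ℝ × ℝ | IsLatticePoint p ∧ p ∉ ↑(P.image latticeEmbed) ∧ p ∈ frontier K}.ncard : ℝ) / 2 +
      ({p : ℝ × ℝ | IsLatticePoint p ∧ p ∉ ↑(P.image latticeEmbed) ∧ p ∈ interior K}.ncard : ℝ) - 1 := by
  set Pim : Set (ℝ × ℝ) := (↑(P.image latticeEmbed) : Set (ℝ × ℝ)) with hPim
  have hKcomp : IsCompact K := hK ▸ (P.image latticeEmbed).finite_toSet.isCompact_convexHull ℝ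
  have hKclosed : IsClosed K := hKcomp.isClosed
  have hMclosed : IsClosed M := hM.isClosed
  have hfrM : frontier M ⊆ M := by
    rw [frontier_eq_closure_inter_closure, hMclosed.closure_eq]
    exact Set.inter_subset_left
  have hintM : interior M ⊆ M := interior_subset
  -- the sets
  set B := {p : ℝ × ℝ | IsLatticePoint p ∧ p ∈ frontier M} with hB
  set I := {p : ℝ × ℝ | IsLatticePoint p ∧ p ∈ interior M} with hI
  set Hb := {p : ℝ × ℝ | IsLatticePoint p ∧ p ∉ Pim ∧ p ∈ frontier K} with hHb
  set Hi := {p : ℝ × ℝ | IsLatticePoint p ∧ p ∉ Pim ∧ p ∈ interior K} with hHi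
  set Bf := (B \ Pim) ∩ frontier K with hBf
  set Bi := (B \ Pim) \ frontier K with hBi
  have hKb : Bornology.IsBounded K := hKcomp.isBounded
  have hMb : Bornology.IsBounded M := hM.isBounded
  -- finiteness
  have hBfin : B.Finite := (lattice_finite hMb).subset (fun p hp => ⟨hp.1, hfrM hp.2⟩)
  have hIfin : I.Finite := (lattice_finite hMb).subset (fun p hp => ⟨hp.1, hintM hp.2⟩)
  have hfrK : frontier K ⊆ K := by
    rw [frontier_eq_closure_inter_closure, hKclosed.closure_eq]
    exact Set.inter_subset_left
  have hHbfin : Hb.Finite := (lattice_finite hKb).subset (fun p hp => ⟨hp.1, hfrK hp.2.2⟩)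
  have hHifin : Hi.Finite := (lattice_finite hKb).subset (fun p hp => ⟨hp.1, interior_subset hp.2.2⟩)
  have hBffin : Bf.Finite := hBfin.subset (fun p hp => hp.1.1)
  have hBifin : Bi.Finite := hBfin.subset (fun p hp => hp.1.1)
  -- Pim ⊆ B
  have hPimB : Pim ⊆ B := by
    rintro p hp
    rw [hPim] at hp
    simp only [Finset.coe_image, Set.mem_image, Finset.mem_coe] at hp
    obtain ⟨q, hq, rfl⟩ := hp
    exact ⟨⟨q.1, q.2, rfl⟩, hPfr q hq⟩
  -- key inclusions
  have hBsub : B ⊆ Pim ∪ Bf ∪ Bi := by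
    intro p hp
    by_cases h : p ∈ Pim
    · exact Or.inl (Or.inl h)
    by_cases h2 : p ∈ frontier K
    · exact Or.inl (Or.inr ⟨⟨hp, h⟩, h2⟩)
    · exact Or.inr ⟨⟨hp, h⟩, h2⟩
  have hBfHb : Bf ⊆ Hb := by
    rintro p ⟨⟨hpB, hpP⟩, hpf⟩
    exact ⟨hpB.1, hpP, hpf⟩
  have hBiHi : Bi ⊆ Hi := by
    rintro p ⟨⟨hpB, hpP⟩, hpf⟩
    refine ⟨hpB.1, hpP, ?_⟩
    have hpK : p ∈ K := hMK (hfrM hpB.2)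
    by_contra hint
    exact hpf (hKclosed.frontier_eq ▸ ⟨hpK, hint⟩)
  have hIHi : I ⊆ Hi := by
    rintro p ⟨hpl, hpi⟩
    refine ⟨hpl, ?_, interior_mono hMK hpi⟩
    intro hp
    have := hPimB hp
    rw [hB, Set.mem_setOf_eq, hMclosed.frontier_eq] at this
    exact this.2.2 hpi
  have hdisj : Disjoint Bi I := by
    rw [Set.disjoint_left]
    rintro p ⟨⟨hpB, _⟩, _⟩ hpI
    have h1 : p ∈ frontier M := hpB.2
    rw [hMclosed.frontier_eq] at h1
    exact h1.2 hpI.2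
  -- cardinality facts
  have hPimcard : Pim.ncard = n := by
    rw [hPim, Set.ncard_coe_finset, Finset.card_image_of_injective _ latticeEmbed_injective, hn]
  have h1 : (B.ncard : ℝ) ≤ (n : ℝ) + Bf.ncard + Bi.ncard := by
    have := Set.ncard_le_ncard hBsub (((hPim ▸ (P.image latticeEmbed).finite_toSet).union hBffin).union hBifin)
    have h2 := Set.ncard_union_le (Pim ∪ Bf) Bi
    have h3 := Set.ncard_union_le Pim Bf
    have : B.ncard ≤ n + Bf.ncard + Bi.ncard := by
      rw [← hPimcard]; omega
    exact_mod_cast this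
  have h2 : (Bf.ncard : ℝ) ≤ Hb.ncard := by
    exact_mod_cast Set.ncard_le_ncard hBfHb hHbfin
  have h3 : (Bi.ncard : ℝ) + I.ncard ≤ Hi.ncard := by
    have hu : (Bi ∪ I).ncard = Bi.ncard + I.ncard :=
      Set.ncard_union_eq hdisj hBifin hIfin
    have hle : (Bi ∪ I).ncard ≤ Hi.ncard :=
      Set.ncard_le_ncard (Set.union_subset hBiHi hIHi) hHifin
    exact_mod_cast hu ▸ hle
  show (volume M).toReal ≤ (n : ℝ) / 2 + (Hb.ncard : ℝ) / 2 + (Hi.ncard : ℝ) - 1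
  rw [hpick]
  have hnn : (0:ℝ) ≤ (Bi.ncard : ℝ) := Nat.cast_nonneg _
  linarith
end

section
/- Half-integrality of lattice-polygon areas: Let S be a finite set of points of the integer lattice ℤ² in the plane, and let K ⊆ ℝ² be the convex hull (over ℝ) of S. Then twice the two-dimensional Lebesgue measure of K is an integer (i.e., the area of K is an integer multiple of 1/2). -/
open MeasureTheory

open Set Pointwise

noncomputable section LatticeHullHelpers


lemma null_span_pair {L : Set (ℝ × ℝ)} (a b : ℝ × ℝ)
    (h : L ⊆ (affineSpan ℝ ({a, b} : Set (ℝ × ℝ)) : Set (ℝ × ℝ))) : volume L = 0 := by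
  refine measure_mono_null h ?_
  apply Measure.addHaar_affineSubspace
  intro htop
  have h1 : vectorSpan ℝ ({a, b} : Set (ℝ × ℝ)) = ⊤ := by
    rw [← direction_affineSpan, htop, AffineSubspace.direction_top]
  have h2 : Module.finrank ℝ (vectorSpan ℝ ({a, b} : Set (ℝ × ℝ))) ≤ 1 := by
    rw [vectorSpan_pair]
    exact (finrank_span_le_card _).trans (by simp)
  rw [h1] at h2
  simp [finrank_top] at h2

lemma mem_span_pair_of_comb {a b p : ℝ × ℝ} (t : ℝ) (h : (1 - t) • a + t • b = p) :
    p ∈ (affineSpan ℝ ({a, b} : Set (ℝ × ℝ)) : Set (ℝ × ℝ)) := by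
  have := AffineMap.lineMap_mem_affineSpan_pair (k := ℝ) t a b
  rwa [AffineMap.lineMap_apply_module, h] at this

def stdTri : Set (ℝ × ℝ) := {p | 0 ≤ p.1 ∧ 0 ≤ p.2 ∧ p.1 + p.2 ≤ 1}

lemma volume_stdTri : volume stdTri = ENNReal.ofReal (1/2) := by
  set R := regionBetween (fun _ => (0:ℝ)) (fun x => 1 - x) (Ioo 0 1) with hR
  have hreg : R ⊆ stdTri := by
    rintro ⟨x, y⟩ ⟨hx, hy⟩
    simp only [mem_Ioo] at hx hy
    exact ⟨hx.1.le, hy.1.le, by linarith [hy.2]⟩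
  have hdiff : stdTri \ R ⊆
      {p : ℝ × ℝ | p.1 = 0} ∪ {p : ℝ × ℝ | p.2 = 0} ∪ {p : ℝ × ℝ | p.1 + p.2 = 1} := by
    rintro ⟨x, y⟩ ⟨⟨hx, hy, hxy⟩, hn⟩
    by_cases h1 : x = 0
    · exact Or.inl (Or.inl h1)
    by_cases h2 : y = 0
    · exact Or.inl (Or.inr h2)
    right
    by_contra h3
    have hx' : 0 < x := lt_of_le_of_ne hx (Ne.symm h1)
    have hy' : 0 < y := lt_of_le_of_ne hy (Ne.symm h2)
    have hxy' : x + y < 1 := lt_of_le_of_ne hxy h3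
    exact hn ⟨mem_Ioo.2 ⟨hx', by linarith⟩, mem_Ioo.2 ⟨hy', by dsimp; linarith⟩⟩
  have hnull : volume (stdTri \ R) = 0 := by
    refine measure_mono_null hdiff ?_
    refine measure_union_null (measure_union_null ?_ ?_) ?_
    · refine null_span_pair (0,0) (0,1) ?_
      rintro ⟨x, y⟩ hx
      simp only [mem_setOf_eq] at hx
      subst hx
      exact mem_span_pair_of_comb y (by simp [Prod.ext_iff])
    · refine null_span_pair (0,0) (1,0) ?_
      rintro ⟨x, y⟩ hy
      simp only [mem_setOf_eq] at hy
      subst hy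
      exact mem_span_pair_of_comb x (by simp [Prod.ext_iff])
    · refine null_span_pair (0,1) (1,0) ?_
      rintro ⟨x, y⟩ hxy
      simp only [mem_setOf_eq] at hxy
      refine mem_span_pair_of_comb x ?_
      simp only [Prod.smul_mk, smul_eq_mul, Prod.mk_add_mk, Prod.mk.injEq]
      constructor <;> ring_nf <;> linarith
  have hint : (∫ y in Ioo (0:ℝ) 1, (((fun x => 1 - x) : ℝ → ℝ) - ((fun _ => 0) : ℝ → ℝ)) y) = 1/2 := by
    simp only [Pi.sub_apply, sub_zero]
    rw [← MeasureTheory.integral_Ioc_eq_integral_Ioo,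
      ← intervalIntegral.integral_of_le zero_le_one,
      intervalIntegral.integral_sub intervalIntegrable_const intervalIntegral.intervalIntegrable_id]
    simp [integral_id]
    norm_num
  have hvol : volume R = ENNReal.ofReal (1/2) := by
    rw [hR, show (volume : Measure (ℝ × ℝ)) = (volume : Measure ℝ).prod volume from rfl,
      volume_regionBetween_eq_integral (f := fun _ => (0:ℝ)) (g := fun x => 1 - x)
      (integrableOn_const (by simp) (by simp))
      (((continuous_const.sub continuous_id).integrableOn_Icc (a := (0:ℝ)) (b := (1:ℝ)) (μ := volume)).mono_set
        Ioo_subset_Icc_self) measurableSet_Ioo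
      (fun x hx => by simp only [mem_Ioo] at hx; show (0:ℝ) ≤ 1 - x; linarith [hx.2]), hint]
  have hle : volume stdTri ≤ volume R := by
    calc volume stdTri ≤ volume (R ∪ (stdTri \ R)) :=
          measure_mono (fun p hp => by by_cases h : p ∈ R; exacts [Or.inl h, Or.inr ⟨hp, h⟩])
      _ ≤ volume R + volume (stdTri \ R) := measure_union_le _ _
      _ = volume R := by rw [hnull, add_zero]
  exact le_antisymm (hle.trans_eq hvol) (hvol ▸ measure_mono hreg)

noncomputable def Tmap (u v : ℝ × ℝ) : (ℝ × ℝ) →ₗ[ℝ] (ℝ × ℝ) :=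
  LinearMap.prod (u.1 • LinearMap.fst ℝ ℝ ℝ + v.1 • LinearMap.snd ℝ ℝ ℝ)
    (u.2 • LinearMap.fst ℝ ℝ ℝ + v.2 • LinearMap.snd ℝ ℝ ℝ)

lemma Tmap_apply (u v p : ℝ × ℝ) : Tmap u v p = (p.1 * u.1 + p.2 * v.1, p.1 * u.2 + p.2 * v.2) := by
  simp [Tmap, mul_comm]

lemma Tmap_det (u v : ℝ × ℝ) : LinearMap.det (Tmap u v) = u.1 * v.2 - u.2 * v.1 := by
  rw [← LinearMap.det_toMatrix (Module.Basis.finTwoProd ℝ), Matrix.det_fin_two]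
  simp [LinearMap.toMatrix_apply, Tmap, Module.Basis.finTwoProd]
  ring

lemma convex_stdTri : Convex ℝ stdTri := by
  rintro ⟨x1, x2⟩ ⟨hx1, hx2, hx3⟩ ⟨y1, y2⟩ ⟨hy1, hy2, hy3⟩ s t hs ht hst
  simp only [Prod.smul_mk, smul_eq_mul, Prod.mk_add_mk, stdTri, mem_setOf_eq] at *
  refine ⟨by positivity, by positivity, by nlinarith⟩

lemma hull_triple_eq (a b c : ℝ × ℝ) :
    convexHull ℝ ({a, b, c} : Set (ℝ × ℝ)) = a +ᵥ (Tmap (b - a) (c - a) '' stdTri) := by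
  apply Subset.antisymm
  · apply convexHull_min
    · have mem : ∀ p : ℝ × ℝ, p ∈ stdTri →
          a + Tmap (b-a) (c-a) p ∈ a +ᵥ (Tmap (b - a) (c - a) '' stdTri) := by
        intro p hp
        exact Set.vadd_mem_vadd_set (a := a) ⟨p, hp, rfl⟩
      rintro x hx
      rcases hx with h | h | h
      · exact Set.mem_of_eq_of_mem (h.trans (show a = a + Tmap (b-a) (c-a) (0,0) by
          simp [Tmap_apply])) (mem (0,0) ⟨le_refl 0, le_refl 0, by norm_num⟩)
      · exact Set.mem_of_eq_of_mem (h.trans (show b = a + Tmap (b-a) (c-a) (1,0) by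
          simp only [Tmap_apply, Prod.ext_iff, Prod.fst_add, Prod.snd_add, Prod.fst_sub,
            Prod.snd_sub]
          constructor <;> ring)) (mem (1,0) ⟨zero_le_one, le_refl 0, by norm_num⟩)
      · exact Set.mem_of_eq_of_mem ((show x = c from h).trans
          (show c = a + Tmap (b-a) (c-a) (0,1) by
          simp only [Tmap_apply, Prod.ext_iff, Prod.fst_add, Prod.snd_add, Prod.fst_sub,
            Prod.snd_sub]
          constructor <;> ring)) (mem (0,1) ⟨le_refl 0, zero_le_one, by norm_num⟩)
    · exact (convex_stdTri.linear_image (Tmap (b - a) (c - a))).vadd a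
  · rintro x ⟨q, ⟨p, ⟨h1, h2, h3⟩, rfl⟩, rfl⟩
    refine mem_convexHull_of_exists_fintype (ι := Fin 3)
      ![1 - p.1 - p.2, p.1, p.2] ![a, b, c] ?_ ?_ ?_ ?_
    · intro i; fin_cases i <;> simp <;> linarith
    · simp [Fin.sum_univ_three]; ring
    · intro i; fin_cases i <;> simp
    · simp [Fin.sum_univ_three, Tmap_apply, Prod.ext_iff, vadd_eq_add]
      constructor <;> ring
lemma volume_hull_triple (a b c : ℝ × ℝ) :
    volume (convexHull ℝ ({a, b, c} : Set (ℝ × ℝ))) =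
      ENNReal.ofReal (|(b.1 - a.1) * (c.2 - a.2) - (b.2 - a.2) * (c.1 - a.1)| / 2) := by
  rw [hull_triple_eq, measure_vadd]
  rw [Measure.addHaar_image_linearMap, volume_stdTri, Tmap_det]
  rw [← ENNReal.ofReal_mul (abs_nonneg _), mul_one_div]
  simp [Prod.fst_sub, Prod.snd_sub]


/-- The linear functional whose kernel-translate is the line through `p1`,`p2`. -/
noncomputable def LL (v : ℝ × ℝ) : (ℝ × ℝ) →ₗ[ℝ] ℝ :=
  v.2 • LinearMap.fst ℝ ℝ ℝ - v.1 • LinearMap.snd ℝ ℝ ℝ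

noncomputable def gfun (p1 p2 x : ℝ × ℝ) : ℝ := LL (p2 - p1) x - LL (p2 - p1) p1

lemma gfun_apply (p1 p2 x : ℝ × ℝ) :
    gfun p1 p2 x = (x.1 - p1.1) * (p2.2 - p1.2) - (x.2 - p1.2) * (p2.1 - p1.1) := by
  simp [gfun, LL]; ring

noncomputable def tf (p1 p2 x : ℝ × ℝ) : ℝ :=
  (x.1 - p1.1) * (p2.1 - p1.1) + (x.2 - p1.2) * (p2.2 - p1.2)

lemma gfun_self (p1 p2 : ℝ × ℝ) : gfun p1 p2 p1 = 0 := by rw [gfun_apply]; ring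

lemma gfun_snd (p1 p2 : ℝ × ℝ) : gfun p1 p2 p2 = 0 := by rw [gfun_apply]; ring

lemma gfun_swap (p1 p2 x : ℝ × ℝ) : gfun p2 p1 x = - gfun p1 p2 x := by
  rw [gfun_apply, gfun_apply]; ring

lemma tf_self (p1 p2 : ℝ × ℝ) : tf p1 p2 p1 = 0 := by rw [tf]; ring

lemma Npos {p1 p2 : ℝ × ℝ} (h : p1 ≠ p2) :
    0 < (p2.1 - p1.1) ^ 2 + (p2.2 - p1.2) ^ 2 := by
  rcases lt_or_eq_of_le (by positivity : (0:ℝ) ≤ (p2.1 - p1.1) ^ 2 + (p2.2 - p1.2) ^ 2) with h' | h'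
  · exact h'
  · exfalso
    apply h
    have h1 : (p2.1 - p1.1) ^ 2 = 0 := by nlinarith [sq_nonneg (p2.1 - p1.1), sq_nonneg (p2.2 - p1.2)]
    have h2 : (p2.2 - p1.2) ^ 2 = 0 := by nlinarith [sq_nonneg (p2.1 - p1.1), sq_nonneg (p2.2 - p1.2)]
    have := pow_eq_zero_iff (n := 2) (by norm_num) |>.1 h1
    have := pow_eq_zero_iff (n := 2) (by norm_num) |>.1 h2
    ext <;> linarith

lemma tf_snd {p1 p2 : ℝ × ℝ} : tf p1 p2 p2 = (p2.1 - p1.1) ^ 2 + (p2.2 - p1.2) ^ 2 := by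
  rw [tf]; ring

/-- coordinates of a point on the line, in terms of its `tf` parameter. -/
lemma line_coord {p1 p2 w : ℝ × ℝ} (hne : p1 ≠ p2) (hw : gfun p1 p2 w = 0) :
    w.1 = p1.1 + tf p1 p2 w * (p2.1 - p1.1) / ((p2.1 - p1.1) ^ 2 + (p2.2 - p1.2) ^ 2) ∧
    w.2 = p1.2 + tf p1 p2 w * (p2.2 - p1.2) / ((p2.1 - p1.1) ^ 2 + (p2.2 - p1.2) ^ 2) := by
  have hN := Npos hne
  rw [gfun_apply] at hw
  have hN' : ((p2.1 - p1.1) ^ 2 + (p2.2 - p1.2) ^ 2) ≠ 0 := ne_of_gt hN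
  have key1 : (w.1 - p1.1) * ((p2.1 - p1.1) ^ 2 + (p2.2 - p1.2) ^ 2)
      = tf p1 p2 w * (p2.1 - p1.1) := by
    rw [tf]; linear_combination (p2.2 - p1.2) * hw
  have key2 : (w.2 - p1.2) * ((p2.1 - p1.1) ^ 2 + (p2.2 - p1.2) ^ 2)
      = tf p1 p2 w * (p2.2 - p1.2) := by
    rw [tf]; linear_combination (p1.1 - p2.1) * hw
  constructor
  · field_simp
    linarith [key1]
  · field_simp
    linarith [key2]

/-- ordered points on a line lie on segments. -/
lemma mem_seg_of_tf {p1 p2 : ℝ × ℝ} (hne : p1 ≠ p2) {x y z : ℝ × ℝ}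
    (hx : gfun p1 p2 x = 0) (hy : gfun p1 p2 y = 0) (hz : gfun p1 p2 z = 0)
    (h1 : tf p1 p2 x ≤ tf p1 p2 y) (h2 : tf p1 p2 y ≤ tf p1 p2 z) :
    y ∈ segment ℝ x z := by
  have hN := Npos hne
  set N := (p2.1 - p1.1) ^ 2 + (p2.2 - p1.2) ^ 2 with hNdef
  obtain ⟨hx1, hx2⟩ := line_coord hne hx
  obtain ⟨hy1, hy2⟩ := line_coord hne hy
  obtain ⟨hz1, hz2⟩ := line_coord hne hz
  rcases eq_or_lt_of_le (h1.trans h2) with heq | hlt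
  · -- all three parameters equal
    have e1 : tf p1 p2 x = tf p1 p2 y := le_antisymm h1 (by rw [heq]; exact h2)
    have : y = x := by
      ext
      · rw [hy1, hx1, e1]
      · rw [hy2, hx2, e1]
    rw [this]; exact left_mem_segment ℝ x z
  · refine ⟨(tf p1 p2 z - tf p1 p2 y) / (tf p1 p2 z - tf p1 p2 x),
      (tf p1 p2 y - tf p1 p2 x) / (tf p1 p2 z - tf p1 p2 x), ?_, ?_, ?_, ?_⟩
    · apply div_nonneg <;> linarith
    · apply div_nonneg <;> linarith
    · have hd : tf p1 p2 z - tf p1 p2 x ≠ 0 := by intro h; rw [sub_eq_zero] at h; rw [h] at hlt; exact lt_irrefl _ hlt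
      rw [← add_div, div_eq_one_iff_eq hd]; ring
    · have hd : tf p1 p2 z - tf p1 p2 x ≠ 0 := by intro h; rw [sub_eq_zero] at h; rw [h] at hlt; exact lt_irrefl _ hlt
      ext
      · simp only [Prod.fst_add, Prod.smul_fst, smul_eq_mul]
        rw [hx1, hy1, hz1]
        field_simp
        ring
      · simp only [Prod.snd_add, Prod.smul_snd, smul_eq_mul]
        rw [hx2, hy2, hz2]
        field_simp
        ring


lemma gfun_comb2 (p1 p2 u v : ℝ × ℝ) {a b : ℝ} (hab : a + b = 1) :
    gfun p1 p2 (a • u + b • v) = a * gfun p1 p2 u + b * gfun p1 p2 v := by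
  simp only [gfun, map_add, LinearMap.map_smul, smul_eq_mul]
  linear_combination (LL (p2 - p1)) p1 * hab

lemma gfun_wsum (p1 p2 : ℝ × ℝ) (T : Finset (ℝ × ℝ)) (lam : ℝ × ℝ → ℝ)
    (h1 : ∑ y ∈ T, lam y = 1) :
    gfun p1 p2 (∑ y ∈ T, lam y • y) = ∑ y ∈ T, lam y * gfun p1 p2 y := by
  simp only [gfun, map_sum, LinearMap.map_smul, smul_eq_mul]
  simp_rw [mul_sub]
  rw [Finset.sum_sub_distrib, ← Finset.sum_mul, h1, one_mul]

lemma gfun_normalized (p1 p2 : ℝ × ℝ) (T : Finset (ℝ × ℝ)) (lam : ℝ × ℝ → ℝ) {r : ℝ}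
    (hr : ∑ y ∈ T, lam y = r) (h0 : r ≠ 0) :
    gfun p1 p2 (r⁻¹ • ∑ y ∈ T, lam y • y) = r⁻¹ * ∑ y ∈ T, lam y * gfun p1 p2 y := by
  have hrw : r⁻¹ • ∑ y ∈ T, lam y • y = ∑ y ∈ T, (r⁻¹ * lam y) • y := by
    rw [Finset.smul_sum]; simp_rw [mul_smul]
  rw [hrw, gfun_wsum p1 p2 T _ (by rw [← Finset.mul_sum, hr, inv_mul_cancel₀ h0])]
  simp_rw [mul_assoc]
  rw [← Finset.mul_sum]

lemma normalized_mem (T : Finset (ℝ × ℝ)) (lam : ℝ × ℝ → ℝ) (h0 : ∀ y ∈ T, 0 ≤ lam y) {r : ℝ}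
    (hr : ∑ y ∈ T, lam y = r) (hrpos : 0 < r) :
    r⁻¹ • ∑ y ∈ T, lam y • y ∈ convexHull ℝ (T : Set (ℝ × ℝ)) := by
  refine Finset.mem_convexHull'.2 ⟨fun y => r⁻¹ * lam y,
    fun y hy => mul_nonneg (inv_nonneg.2 hrpos.le) (h0 y hy), ?_, ?_⟩
  · rw [← Finset.mul_sum, hr, inv_mul_cancel₀ hrpos.ne']
  · rw [Finset.smul_sum]; simp_rw [mul_smul]

lemma chord (p1 p2 : ℝ × ℝ) (hne : p1 ≠ p2) (S : Finset (ℝ × ℝ))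
    (hnr : ∀ d ∈ S, d ∉ convexHull ℝ ((S.erase d : Finset (ℝ × ℝ)) : Set (ℝ × ℝ)))
    (hp1 : p1 ∈ S) (hp2 : p2 ∈ S) {w : ℝ × ℝ}
    (hw : w ∈ convexHull ℝ (S : Set (ℝ × ℝ))) (hgw : gfun p1 p2 w = 0) :
    w ∈ convexHull ℝ ((S.filter fun x => gfun p1 p2 x = 0) : Set (ℝ × ℝ)) := by
  classical
  obtain ⟨lam, hl0, hl1, hlsum⟩ := Finset.mem_convexHull'.1 hw
  set A := S.filter (fun x => gfun p1 p2 x = 0) with hA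
  set B := S.filter (fun x => ¬ gfun p1 p2 x = 0) with hB
  have hABl : (∑ y ∈ A, lam y) + (∑ y ∈ B, lam y) = 1 := by
    rw [hA, hB, Finset.sum_filter_add_sum_filter_not]; exact hl1
  have hABv : (∑ y ∈ A, lam y • y) + (∑ y ∈ B, lam y • y) = w := by
    rw [hA, hB, Finset.sum_filter_add_sum_filter_not]; exact hlsum
  have hA0 : ∀ y ∈ A, 0 ≤ lam y := fun y hy => hl0 y (Finset.filter_subset _ _ hy)
  have hB0 : ∀ y ∈ B, 0 ≤ lam y := fun y hy => hl0 y (Finset.filter_subset _ _ hy)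
  have hAg : ∀ y ∈ A, gfun p1 p2 y = 0 := fun y hy => (Finset.mem_filter.1 hy).2
  have hlamA0 : 0 ≤ ∑ y ∈ A, lam y := Finset.sum_nonneg hA0
  have hlamB0 : 0 ≤ ∑ y ∈ B, lam y := Finset.sum_nonneg hB0
  by_cases hBz : (∑ y ∈ B, lam y) = 0
  · have hBv : (∑ y ∈ B, lam y • y) = 0 := Finset.sum_eq_zero (fun y hy => by
      rw [(Finset.sum_eq_zero_iff_of_nonneg hB0).1 hBz y hy, zero_smul])
    refine Finset.mem_convexHull'.2 ⟨lam, hA0, by linarith, ?_⟩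
    rw [← hABv, hBv, add_zero]
  · have hlamBpos : 0 < ∑ y ∈ B, lam y := lt_of_le_of_ne hlamB0 (Ne.symm hBz)
    set wB := (∑ y ∈ B, lam y)⁻¹ • ∑ y ∈ B, lam y • y with hwB
    have hwBB : wB ∈ convexHull ℝ (B : Set (ℝ × ℝ)) := normalized_mem B lam hB0 rfl hlamBpos
    have hgwB : gfun p1 p2 wB = 0 := by
      have hsg : ∑ y ∈ S, lam y * gfun p1 p2 y = 0 := by
        rw [← gfun_wsum p1 p2 S lam hl1, hlsum, hgw]
      have hsplit : (∑ y ∈ A, lam y * gfun p1 p2 y) + (∑ y ∈ B, lam y * gfun p1 p2 y) = 0 := by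
        rw [hA, hB, Finset.sum_filter_add_sum_filter_not]; exact hsg
      have hAzero : ∑ y ∈ A, lam y * gfun p1 p2 y = 0 :=
        Finset.sum_eq_zero fun y hy => by rw [hAg y hy, mul_zero]
      have hBsum : ∑ y ∈ B, lam y * gfun p1 p2 y = 0 := by linarith
      rw [hwB, gfun_normalized p1 p2 B lam rfl hBz, hBsum, mul_zero]
    have hp1A : p1 ∈ A := Finset.mem_filter.2 ⟨hp1, gfun_self p1 p2⟩
    have hp2A : p2 ∈ A := Finset.mem_filter.2 ⟨hp2, gfun_snd p1 p2⟩
    obtain ⟨qmax, hqmaxA, hqmax⟩ := A.exists_max_image (tf p1 p2) ⟨p1, hp1A⟩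
    obtain ⟨qmin, hqminA, hqmin⟩ := A.exists_min_image (tf p1 p2) ⟨p1, hp1A⟩
    have hgmax := hAg qmax hqmaxA
    have hgmin := hAg qmin hqminA
    have hNpos := Npos hne
    have htlt : tf p1 p2 qmin < tf p1 p2 qmax := by
      have h1 := hqmin p1 hp1A
      have h2 := hqmax p2 hp2A
      rw [tf_self] at h1
      rw [tf_snd] at h2
      linarith
    rcases lt_or_ge (tf p1 p2 qmax) (tf p1 p2 wB) with hcase | hcase
    · exfalso
      have hseg : qmax ∈ segment ℝ qmin wB :=
        mem_seg_of_tf hne hgmin hgmax hgwB (hqmin qmax hqmaxA) hcase.le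
      have hqminE : qmin ∈ ((S.erase qmax : Finset (ℝ × ℝ)) : Set (ℝ × ℝ)) := by
        refine Finset.mem_coe.2 (Finset.mem_erase.2 ⟨?_, (Finset.mem_filter.1 hqminA).1⟩)
        intro h; rw [h] at htlt; exact lt_irrefl _ htlt
      have hBE : (B : Set (ℝ × ℝ)) ⊆ ((S.erase qmax : Finset (ℝ × ℝ)) : Set (ℝ × ℝ)) := by
        intro b hb
        rcases Finset.mem_filter.1 (Finset.mem_coe.1 hb) with ⟨hbS, hbg⟩
        refine Finset.mem_coe.2 (Finset.mem_erase.2 ⟨?_, hbS⟩)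
        intro h; rw [h] at hbg; exact hbg hgmax
      exact hnr qmax (Finset.mem_filter.1 hqmaxA).1
        ((convex_convexHull ℝ _).segment_subset (subset_convexHull ℝ _ hqminE)
          (convexHull_mono hBE hwBB) hseg)
    rcases lt_or_ge (tf p1 p2 wB) (tf p1 p2 qmin) with hcase2 | hcase2
    · exfalso
      have hseg : qmin ∈ segment ℝ wB qmax :=
        mem_seg_of_tf hne hgwB hgmin hgmax hcase2.le (hqmin qmax hqmaxA)
      have hqmaxE : qmax ∈ ((S.erase qmin : Finset (ℝ × ℝ)) : Set (ℝ × ℝ)) := by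
        refine Finset.mem_coe.2 (Finset.mem_erase.2 ⟨?_, (Finset.mem_filter.1 hqmaxA).1⟩)
        intro h; rw [h] at htlt; exact lt_irrefl _ htlt
      have hBE : (B : Set (ℝ × ℝ)) ⊆ ((S.erase qmin : Finset (ℝ × ℝ)) : Set (ℝ × ℝ)) := by
        intro b hb
        rcases Finset.mem_filter.1 (Finset.mem_coe.1 hb) with ⟨hbS, hbg⟩
        refine Finset.mem_coe.2 (Finset.mem_erase.2 ⟨?_, hbS⟩)
        intro h; rw [h] at hbg; exact hbg hgmin
      exact hnr qmin (Finset.mem_filter.1 hqminA).1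
        ((convex_convexHull ℝ _).segment_subset (convexHull_mono hBE hwBB)
          (subset_convexHull ℝ _ hqmaxE) hseg)
    · have hwBA : wB ∈ convexHull ℝ (A : Set (ℝ × ℝ)) :=
        (convex_convexHull ℝ _).segment_subset (subset_convexHull ℝ _ (Finset.mem_coe.2 hqminA))
          (subset_convexHull ℝ _ (Finset.mem_coe.2 hqmaxA))
          (mem_seg_of_tf hne hgmin hgwB hgmax hcase2 hcase)
      by_cases hAz : (∑ y ∈ A, lam y) = 0
      · have hAv : (∑ y ∈ A, lam y • y) = 0 := Finset.sum_eq_zero (fun y hy => by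
          rw [(Finset.sum_eq_zero_iff_of_nonneg hA0).1 hAz y hy, zero_smul])
        have hB1 : (∑ y ∈ B, lam y) = 1 := by linarith
        have : w = wB := by
          rw [hwB, hB1, inv_one, one_smul, ← hABv, hAv, zero_add]
        rw [this]; exact hwBA
      · have hlamApos : 0 < ∑ y ∈ A, lam y := lt_of_le_of_ne hlamA0 (Ne.symm hAz)
        set wA := (∑ y ∈ A, lam y)⁻¹ • ∑ y ∈ A, lam y • y with hwA
        have hwAA : wA ∈ convexHull ℝ (A : Set (ℝ × ℝ)) := normalized_mem A lam hA0 rfl hlamApos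
        have hcomb : w = (∑ y ∈ A, lam y) • wA + (∑ y ∈ B, lam y) • wB := by
          rw [hwA, hwB, smul_inv_smul₀ hAz, smul_inv_smul₀ hBz, hABv]
        rw [hcomb]
        exact convex_convexHull ℝ (A : Set (ℝ × ℝ)) hwAA hwBA hlamA0 hlamB0 hABl

lemma halfplane (p1 p2 : ℝ × ℝ) (hne : p1 ≠ p2) (S : Finset (ℝ × ℝ))
    (hnr : ∀ d ∈ S, d ∉ convexHull ℝ ((S.erase d : Finset (ℝ × ℝ)) : Set (ℝ × ℝ)))
    (hp1 : p1 ∈ S) (hp2 : p2 ∈ S) {x : ℝ × ℝ}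
    (hx : x ∈ convexHull ℝ (S : Set (ℝ × ℝ))) (hgx : 0 ≤ gfun p1 p2 x) :
    x ∈ convexHull ℝ ((S.filter fun y => 0 ≤ gfun p1 p2 y) : Set (ℝ × ℝ)) := by
  classical
  obtain ⟨lam, hl0, hl1, hlsum⟩ := Finset.mem_convexHull'.1 hx
  set P := S.filter (fun y => 0 ≤ gfun p1 p2 y) with hP
  set Q := S.filter (fun y => ¬ 0 ≤ gfun p1 p2 y) with hQ
  have hPQl : (∑ y ∈ P, lam y) + (∑ y ∈ Q, lam y) = 1 := by
    rw [hP, hQ, Finset.sum_filter_add_sum_filter_not]; exact hl1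
  have hPQv : (∑ y ∈ P, lam y • y) + (∑ y ∈ Q, lam y • y) = x := by
    rw [hP, hQ, Finset.sum_filter_add_sum_filter_not]; exact hlsum
  have hP0 : ∀ y ∈ P, 0 ≤ lam y := fun y hy => hl0 y (Finset.filter_subset _ _ hy)
  have hQ0 : ∀ y ∈ Q, 0 ≤ lam y := fun y hy => hl0 y (Finset.filter_subset _ _ hy)
  have hPg : ∀ y ∈ P, 0 ≤ gfun p1 p2 y := fun y hy => (Finset.mem_filter.1 hy).2
  have hQg : ∀ y ∈ Q, gfun p1 p2 y < 0 := fun y hy =>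
    lt_of_not_ge (Finset.mem_filter.1 hy).2
  have hlamP0 : 0 ≤ ∑ y ∈ P, lam y := Finset.sum_nonneg hP0
  have hlamQ0 : 0 ≤ ∑ y ∈ Q, lam y := Finset.sum_nonneg hQ0
  have hgsum : (∑ y ∈ P, lam y * gfun p1 p2 y) + (∑ y ∈ Q, lam y * gfun p1 p2 y)
      = gfun p1 p2 x := by
    rw [hP, hQ, Finset.sum_filter_add_sum_filter_not, ← gfun_wsum p1 p2 S lam hl1, hlsum]
  by_cases hQz : (∑ y ∈ Q, lam y) = 0
  · have hQv : (∑ y ∈ Q, lam y • y) = 0 := Finset.sum_eq_zero (fun y hy => by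
      rw [(Finset.sum_eq_zero_iff_of_nonneg hQ0).1 hQz y hy, zero_smul])
    refine Finset.mem_convexHull'.2 ⟨lam, hP0, by linarith, ?_⟩
    rw [← hPQv, hQv, add_zero]
  · have hlamQpos : 0 < ∑ y ∈ Q, lam y := lt_of_le_of_ne hlamQ0 (Ne.symm hQz)
    set z := (∑ y ∈ Q, lam y)⁻¹ • ∑ y ∈ Q, lam y • y with hz
    have hzQ : z ∈ convexHull ℝ (Q : Set (ℝ × ℝ)) := normalized_mem Q lam hQ0 rfl hlamQpos
    have hsumQneg : (∑ y ∈ Q, lam y * gfun p1 p2 y) < 0 := by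
      have hex : ∃ y ∈ Q, 0 < lam y := by
        by_contra hc
        push_neg at hc
        exact hQz (Finset.sum_eq_zero fun y hy => le_antisymm (hc y hy) (hQ0 y hy))
      obtain ⟨y0, hy0Q, hy0⟩ := hex
      calc (∑ y ∈ Q, lam y * gfun p1 p2 y) < ∑ y ∈ Q, (0:ℝ) := by
            refine Finset.sum_lt_sum (fun y hy => mul_nonpos_of_nonneg_of_nonpos (hQ0 y hy)
              (hQg y hy).le) ⟨y0, hy0Q, mul_neg_of_pos_of_neg hy0 (hQg y0 hy0Q)⟩
        _ = 0 := Finset.sum_const_zero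
    have hgz : gfun p1 p2 z = (∑ y ∈ Q, lam y)⁻¹ * ∑ y ∈ Q, lam y * gfun p1 p2 y :=
      gfun_normalized p1 p2 Q lam rfl hQz
    have hgzneg : gfun p1 p2 z < 0 := by
      rw [hgz]
      exact mul_neg_of_pos_of_neg (inv_pos.2 hlamQpos) hsumQneg
    by_cases hPz : (∑ y ∈ P, lam y) = 0
    · exfalso
      have hPv : (∑ y ∈ P, lam y • y) = 0 := Finset.sum_eq_zero (fun y hy => by
        rw [(Finset.sum_eq_zero_iff_of_nonneg hP0).1 hPz y hy, zero_smul])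
      have hQ1 : (∑ y ∈ Q, lam y) = 1 := by linarith
      have hxz : x = z := by rw [hz, hQ1, inv_one, one_smul, ← hPQv, hPv, zero_add]
      rw [hxz] at hgx
      linarith
    · have hlamPpos : 0 < ∑ y ∈ P, lam y := lt_of_le_of_ne hlamP0 (Ne.symm hPz)
      set y := (∑ y' ∈ P, lam y')⁻¹ • ∑ y' ∈ P, lam y' • y' with hy
      have hyP : y ∈ convexHull ℝ (P : Set (ℝ × ℝ)) := normalized_mem P lam hP0 rfl hlamPpos
      have hgy : gfun p1 p2 y = (∑ y' ∈ P, lam y')⁻¹ * ∑ y' ∈ P, lam y' * gfun p1 p2 y' :=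
        gfun_normalized p1 p2 P lam rfl hPz
      have hgynn : 0 ≤ gfun p1 p2 y := by
        rw [hgy]
        exact mul_nonneg (inv_nonneg.2 hlamPpos.le)
          (Finset.sum_nonneg fun y' hy' => mul_nonneg (hP0 y' hy') (hPg y' hy'))
      have hxcomb : x = (∑ y' ∈ P, lam y') • y + (∑ y' ∈ Q, lam y') • z := by
        rw [hy, hz, smul_inv_smul₀ hPz, smul_inv_smul₀ hQz, hPQv]
      have hgxval : gfun p1 p2 x
          = (∑ y' ∈ P, lam y') * gfun p1 p2 y + (∑ y' ∈ Q, lam y') * gfun p1 p2 z := by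
        rw [hxcomb, gfun_comb2 p1 p2 y z hPQl]
      have hgypos : 0 < gfun p1 p2 y := by
        rcases eq_or_lt_of_le hgynn with heq | h
        · exfalso
          nlinarith [mul_neg_of_pos_of_neg hlamQpos hgzneg]
        · exact h
      -- the crossing point w on the line
      set s := (- gfun p1 p2 z) / (gfun p1 p2 y - gfun p1 p2 z) with hs
      have hyz : gfun p1 p2 y - gfun p1 p2 z > 0 := by linarith
      have hs0 : 0 ≤ s := div_nonneg (by linarith) hyz.le
      have hs1 : s ≤ 1 := by
        rw [hs, div_le_one hyz]
        linarith
      set w := s • y + (1 - s) • z with hw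
      have hgw : gfun p1 p2 w = 0 := by
        rw [hw, gfun_comb2 p1 p2 y z (by ring), hs]
        field_simp
        ring
      have hwS : w ∈ convexHull ℝ (S : Set (ℝ × ℝ)) := by
        rw [hw]
        refine convex_convexHull ℝ (S : Set (ℝ × ℝ)) ?_ ?_ hs0 (by linarith) (by ring)
        · exact convexHull_mono (Finset.coe_subset.2 (Finset.filter_subset _ _)) hyP
        · exact convexHull_mono (Finset.coe_subset.2 (Finset.filter_subset _ _)) hzQ
      have hwA : w ∈ convexHull ℝ ((S.filter fun x' => gfun p1 p2 x' = 0) : Set (ℝ × ℝ)) :=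
        chord p1 p2 hne S hnr hp1 hp2 hwS hgw
      have hwP : w ∈ convexHull ℝ (P : Set (ℝ × ℝ)) := by
        refine convexHull_mono ?_ hwA
        intro u hu
        rcases Finset.mem_filter.1 (Finset.mem_coe.1 hu) with ⟨huS, hug⟩
        exact Finset.mem_coe.2 (Finset.mem_filter.2 ⟨huS, le_of_eq hug.symm⟩)
      -- now x is a convex combination of y and w
      set a := gfun p1 p2 x / gfun p1 p2 y with ha
      set b := (∑ y' ∈ Q, lam y') * (gfun p1 p2 y - gfun p1 p2 z) / gfun p1 p2 y with hb
      have ha0 : 0 ≤ a := div_nonneg hgx hgypos.le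
      have hb0 : 0 ≤ b := div_nonneg (mul_nonneg hlamQ0 hyz.le) hgypos.le
      have hab : a + b = 1 := by
        rw [ha, hb, ← add_div, hgxval]
        field_simp
        linear_combination gfun p1 p2 y * hPQl
      have hbs : b * (1 - s) = ∑ y' ∈ Q, lam y' := by
        rw [hb, hs]
        field_simp
        ring
      have has : a + b * s = ∑ y' ∈ P, lam y' := by
        have h1 : a + b * s = (a + b) - b * (1 - s) := by ring
        rw [h1, hab, hbs]
        linarith
      have hxw : x = a • y + b • w := by
        have hmod : a • y + b • w = (a + b * s) • y + (b * (1 - s)) • z := by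
          rw [hw]; module
        rw [hmod, has, hbs]; exact hxcomb
      rw [hxw]
      exact convex_convexHull ℝ (P : Set (ℝ × ℝ)) hyP hwP ha0 hb0 hab

lemma hull_split (p1 p2 : ℝ × ℝ) (hne : p1 ≠ p2) (S : Finset (ℝ × ℝ))
    (hnr : ∀ d ∈ S, d ∉ convexHull ℝ ((S.erase d : Finset (ℝ × ℝ)) : Set (ℝ × ℝ)))
    (hp1 : p1 ∈ S) (hp2 : p2 ∈ S) :
    convexHull ℝ (S : Set (ℝ × ℝ)) ⊆
      convexHull ℝ ((S.filter fun y => 0 ≤ gfun p1 p2 y) : Set (ℝ × ℝ)) ∪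
      convexHull ℝ ((S.filter fun y => gfun p1 p2 y ≤ 0) : Set (ℝ × ℝ)) := by
  intro x hx
  rcases le_or_gt 0 (gfun p1 p2 x) with h | h
  · exact Or.inl (halfplane p1 p2 hne S hnr hp1 hp2 hx h)
  · right
    have h2 : 0 ≤ gfun p2 p1 x := by rw [gfun_swap]; linarith
    have := halfplane p2 p1 hne.symm S hnr hp2 hp1 hx h2
    refine convexHull_mono ?_ this
    intro u hu
    rcases Finset.mem_filter.1 (Finset.mem_coe.1 hu) with ⟨huS, hug⟩
    rw [gfun_swap] at hug
    exact Finset.mem_coe.2 (Finset.mem_filter.2 ⟨huS, by linarith⟩)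

lemma hull_erase (S : Finset (ℝ × ℝ)) (d : ℝ × ℝ) (hd : d ∈ S)
    (h : d ∈ convexHull ℝ ((S.erase d : Finset (ℝ × ℝ)) : Set (ℝ × ℝ))) :
    convexHull ℝ (S : Set (ℝ × ℝ)) = convexHull ℝ ((S.erase d : Finset (ℝ × ℝ)) : Set (ℝ × ℝ)) := by
  apply Subset.antisymm
  · apply convexHull_min
    · intro x hx
      rcases eq_or_ne x d with rfl | hne
      · exact h
      · exact subset_convexHull ℝ _ (Finset.mem_coe.2 (Finset.mem_erase.2 ⟨hne, Finset.mem_coe.1 hx⟩))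
    · exact convex_convexHull ℝ _
  · exact convexHull_mono (Finset.coe_subset.2 (Finset.erase_subset d S))

lemma seg_contra (S : Finset (ℝ × ℝ))
    (hnr : ∀ d ∈ S, d ∉ convexHull ℝ ((S.erase d : Finset (ℝ × ℝ)) : Set (ℝ × ℝ)))
    {m a b : ℝ × ℝ} (hm : m ∈ S) (ha : a ∈ S) (hb : b ∈ S) (hna : a ≠ m) (hnb : b ≠ m)
    (hseg : m ∈ segment ℝ a b) : False :=
  hnr m hm ((convex_convexHull ℝ _).segment_subset
    (subset_convexHull ℝ _ (Finset.mem_coe.2 (Finset.mem_erase.2 ⟨hna, ha⟩)))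
    (subset_convexHull ℝ _ (Finset.mem_coe.2 (Finset.mem_erase.2 ⟨hnb, hb⟩))) hseg)

lemma collinear_contra (S : Finset (ℝ × ℝ))
    (hnr : ∀ d ∈ S, d ∉ convexHull ℝ ((S.erase d : Finset (ℝ × ℝ)) : Set (ℝ × ℝ)))
    {q1 q2 q3 : ℝ × ℝ} (h1 : q1 ∈ S) (h2 : q2 ∈ S) (h3 : q3 ∈ S)
    (h12 : q1 ≠ q2) (h13 : q1 ≠ q3) (h23 : q2 ≠ q3) (hg : gfun q1 q2 q3 = 0) : False := by
  have hgq1 : gfun q1 q2 q1 = 0 := gfun_self _ _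
  have hgq2 : gfun q1 q2 q2 = 0 := gfun_snd _ _
  have hN := Npos h12
  rcases le_or_gt (tf q1 q2 q3) 0 with hc | hc
  · refine seg_contra S hnr h1 h3 h2 h13.symm h12.symm
      (mem_seg_of_tf h12 hg hgq1 hgq2 ?_ ?_)
    · rw [tf_self]; exact hc
    · rw [tf_self, tf_snd]; exact hN.le
  rcases le_or_gt ((q2.1 - q1.1) ^ 2 + (q2.2 - q1.2) ^ 2) (tf q1 q2 q3) with hc2 | hc2
  · refine seg_contra S hnr h2 h1 h3 h12 h23.symm
      (mem_seg_of_tf h12 hgq1 hgq2 hg ?_ ?_)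
    · rw [tf_self, tf_snd]; exact hN.le
    · rw [tf_snd]; exact hc2
  · refine seg_contra S hnr h3 h1 h2 h13 h23
      (mem_seg_of_tf h12 hgq1 hg hgq2 ?_ ?_)
    · rw [tf_self]; exact hc.le
    · rw [tf_snd]; exact hc2.le

lemma mem_hull_of_index_sum {ι : Type} (T : Finset ι) (f : ι → ℝ × ℝ) (w : ι → ℝ)
    (E : Finset (ℝ × ℝ)) (hE : ∀ e ∈ T, f e ∈ E) (h0 : ∀ e ∈ T, 0 ≤ w e) {σ : ℝ}
    (hσ : ∑ e ∈ T, w e = σ) (hpos : 0 < σ) :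
    σ⁻¹ • ∑ e ∈ T, w e • f e ∈ convexHull ℝ (E : Set (ℝ × ℝ)) := by
  refine mem_convexHull_of_exists_fintype (ι := {x // x ∈ T}) (fun e => σ⁻¹ * w e.1)
    (fun e => f e.1) (fun e => mul_nonneg (inv_nonneg.2 hpos.le) (h0 e.1 e.2)) ?_
    (fun e => Finset.mem_coe.2 (hE e.1 e.2)) ?_
  · rw [Finset.sum_coe_sort T (fun e => σ⁻¹ * w e), ← Finset.mul_sum, hσ,
      inv_mul_cancel₀ hpos.ne']
  · rw [Finset.sum_coe_sort T (fun e => (σ⁻¹ * w e) • f e), Finset.smul_sum]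
    simp_rw [mul_smul]

lemma exists_split (S : Finset (ℝ × ℝ))
    (hnr : ∀ d ∈ S, d ∉ convexHull ℝ ((S.erase d : Finset (ℝ × ℝ)) : Set (ℝ × ℝ)))
    (hcard : 4 ≤ S.card) :
    ∃ p1 ∈ S, ∃ p2 ∈ S, ∃ p3 ∈ S, ∃ p4 ∈ S,
      p1 ≠ p2 ∧ gfun p1 p2 p3 < 0 ∧ 0 < gfun p1 p2 p4 := by
  classical
  obtain ⟨a, ha⟩ := Finset.card_pos.1 (show 0 < S.card by omega)
  obtain ⟨b, hb⟩ := Finset.card_pos.1 (show 0 < (S.erase a).card by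
    rw [Finset.card_erase_of_mem ha]; omega)
  obtain ⟨c, hc⟩ := Finset.card_pos.1 (show 0 < ((S.erase a).erase b).card by
    rw [Finset.card_erase_of_mem hb, Finset.card_erase_of_mem ha]; omega)
  obtain ⟨d, hd⟩ := Finset.card_pos.1 (show 0 < (((S.erase a).erase b).erase c).card by
    rw [Finset.card_erase_of_mem hc, Finset.card_erase_of_mem hb,
      Finset.card_erase_of_mem ha]; omega)
  have hbS : b ∈ S := Finset.mem_of_mem_erase hb
  have hcS : c ∈ S := Finset.mem_of_mem_erase (Finset.mem_of_mem_erase hc)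
  have hdS : d ∈ S :=
    Finset.mem_of_mem_erase (Finset.mem_of_mem_erase (Finset.mem_of_mem_erase hd))
  have hba : b ≠ a := (Finset.mem_erase.1 hb).1
  have hcb : c ≠ b := (Finset.mem_erase.1 hc).1
  have hca : c ≠ a := (Finset.mem_erase.1 (Finset.mem_of_mem_erase hc)).1
  have hdc : d ≠ c := (Finset.mem_erase.1 hd).1
  have hdb : d ≠ b := (Finset.mem_erase.1 (Finset.mem_of_mem_erase hd)).1
  have hda : d ≠ a :=
    (Finset.mem_erase.1 (Finset.mem_of_mem_erase (Finset.mem_of_mem_erase hd))).1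
  set f : Fin 4 → ℝ × ℝ := ![a, b, c, d] with hf
  have hfS : ∀ i, f i ∈ S := by
    intro i
    fin_cases i <;> simp only [hf, Matrix.cons_val_zero, Matrix.cons_val_one, Matrix.head_cons,
      Matrix.cons_val_two, Matrix.tail_cons, Matrix.cons_val_three] <;> assumption
  have hfinj : Function.Injective f := by
    intro i j hij
    fin_cases i <;> fin_cases j <;> simp_all [hf] <;> tauto
  have hnotaff : ¬ AffineIndependent ℝ f := by
    intro haff
    have h1 := haff.card_le_finrank_succ
    have h2 : Module.finrank ℝ (vectorSpan ℝ (Set.range f)) ≤ Module.finrank ℝ (ℝ × ℝ) :=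
      Submodule.finrank_le _
    have hdim : Module.finrank ℝ (ℝ × ℝ) = 2 := by
      simp [Module.finrank_prod]
    rw [Fintype.card_fin] at h1
    omega
  rw [affineIndependent_iff] at hnotaff
  push_neg at hnotaff
  obtain ⟨s, w, hwsum, hvsum, i0, hi0s, hi0⟩ := hnotaff
  set P := s.filter (fun i => 0 < w i) with hP
  set Nn := s.filter (fun i => w i < 0) with hNn
  have hPs : (∑ e ∈ P, w e) + ∑ e ∈ s.filter (fun i => ¬ 0 < w i), w e = 0 := by
    rw [hP, Finset.sum_filter_add_sum_filter_not]; exact hwsum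
  have hNsub : Nn ⊆ s.filter (fun i => ¬ 0 < w i) := by
    intro e he
    rcases Finset.mem_filter.1 he with ⟨hes, hew⟩
    exact Finset.mem_filter.2 ⟨hes, by linarith⟩
  have hNeq : ∑ e ∈ s.filter (fun i => ¬ 0 < w i), w e = ∑ e ∈ Nn, w e :=
    (Finset.sum_subset hNsub (fun e hes hen => by
      have h1 : ¬ 0 < w e := (Finset.mem_filter.1 hes).2
      have h2 : ¬ w e < 0 := fun hlt =>
        hen (Finset.mem_filter.2 ⟨(Finset.mem_filter.1 hes).1, hlt⟩)
      linarith)).symm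
  have hNveq : ∑ e ∈ s.filter (fun i => ¬ 0 < w i), w e • f e = ∑ e ∈ Nn, w e • f e :=
    (Finset.sum_subset hNsub (fun e hes hen => by
      have h1 : ¬ 0 < w e := (Finset.mem_filter.1 hes).2
      have h2 : ¬ w e < 0 := fun hlt =>
        hen (Finset.mem_filter.2 ⟨(Finset.mem_filter.1 hes).1, hlt⟩)
      rw [show w e = 0 by linarith, zero_smul])).symm
  have hvP : (∑ e ∈ P, w e • f e) + ∑ e ∈ Nn, w e • f e = 0 := by
    rw [← hNveq, hP, Finset.sum_filter_add_sum_filter_not]; exact hvsum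
  have hsP : (∑ e ∈ P, w e) + ∑ e ∈ Nn, w e = 0 := by rw [← hNeq]; exact hPs
  have hσ0 : 0 ≤ ∑ e ∈ P, w e :=
    Finset.sum_nonneg (fun e he => ((Finset.mem_filter.1 he).2).le)
  have hσpos : 0 < ∑ e ∈ P, w e := by
    rcases eq_or_lt_of_le hσ0 with heq | h
    · exfalso
      have hPe : P = ∅ := by
        by_contra hPne
        have := Finset.sum_pos (fun e he => (Finset.mem_filter.1 he).2)
          (Finset.nonempty_iff_ne_empty.2 hPne)
        rw [← heq] at this
        exact lt_irrefl _ this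
      have hNe : Nn = ∅ := by
        by_contra hNne
        have hlt : ∑ e ∈ Nn, w e < 0 := by
          calc ∑ e ∈ Nn, w e < ∑ e ∈ Nn, (0:ℝ) := Finset.sum_lt_sum_of_nonempty
                (Finset.nonempty_iff_ne_empty.2 hNne) (fun e he => (Finset.mem_filter.1 he).2)
            _ = 0 := Finset.sum_const_zero
        rw [hPe, Finset.sum_empty, zero_add] at hsP
        linarith
      apply hi0
      have h1 : ¬ 0 < w i0 := fun h =>
        (Finset.eq_empty_iff_forall_notMem.1 hPe i0) (Finset.mem_filter.2 ⟨hi0s, h⟩)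
      have h2 : ¬ w i0 < 0 := fun h =>
        (Finset.eq_empty_iff_forall_notMem.1 hNe i0) (Finset.mem_filter.2 ⟨hi0s, h⟩)
      linarith
    · exact h
  have hνneg : ∑ e ∈ Nn, w e = - ∑ e ∈ P, w e := by linarith
  -- no singletons
  have hPcard : 2 ≤ P.card := by
    by_contra hlt
    push_neg at hlt
    have hPne : P.Nonempty := by
      rcases Finset.eq_empty_or_nonempty P with he | hne
      · rw [he, Finset.sum_empty] at hσpos; exact absurd hσpos (lt_irrefl 0)
      · exact hne
    have hP1 : P.card = 1 := le_antisymm (by omega) (Finset.card_pos.2 hPne)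
    obtain ⟨i1, hi1⟩ := Finset.card_eq_one.1 hP1
    have hwi1 : w i1 = ∑ e ∈ P, w e := by rw [hi1, Finset.sum_singleton]
    have hwi1pos : 0 < w i1 := by
      have hmem : i1 ∈ P := by rw [hi1]; exact Finset.mem_singleton_self i1
      exact (Finset.mem_filter.1 hmem).2
    have hval : (∑ e ∈ P, w e)⁻¹ • ∑ e ∈ Nn, (-w e) • f e = f i1 := by
      have h1 : ∑ e ∈ Nn, (-w e) • f e = ∑ e ∈ P, w e • f e := by
        have h2 : ∑ e ∈ Nn, (-w e) • f e = - ∑ e ∈ Nn, w e • f e := by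
          simp_rw [neg_smul]
          exact Finset.sum_neg_distrib _
        rw [h2, eq_comm, eq_neg_iff_add_eq_zero]
        exact hvP
      rw [h1, hi1, Finset.sum_singleton, Finset.sum_singleton]
      exact inv_smul_smul₀ (ne_of_gt hwi1pos) _
    have hmem : f i1 ∈ convexHull ℝ ((S.erase (f i1) : Finset (ℝ × ℝ)) : Set (ℝ × ℝ)) := by
      have hmm := mem_hull_of_index_sum Nn f (fun e => -w e) (S.erase (f i1)) ?_ ?_ ?_ hσpos
      · rw [hval] at hmm; exact hmm
      · intro e he
        refine Finset.mem_erase.2 ⟨?_, hfS e⟩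
        intro heq
        have hei1 : e = i1 := hfinj heq
        have : w e < 0 := (Finset.mem_filter.1 he).2
        rw [hei1, hwi1] at this
        linarith
      · intro e he
        have : w e < 0 := (Finset.mem_filter.1 he).2
        exact neg_nonneg.2 this.le
      · rw [show (∑ e ∈ Nn, -w e) = - ∑ e ∈ Nn, w e from Finset.sum_neg_distrib _, hνneg, neg_neg]
    exact hnr (f i1) (hfS i1) hmem
  have hNcard : 2 ≤ Nn.card := by
    by_contra hlt
    push_neg at hlt
    have hNne : Nn.Nonempty := by
      rcases Finset.eq_empty_or_nonempty Nn with he | hne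
      · rw [he, Finset.sum_empty] at hνneg; exfalso; linarith
      · exact hne
    have hN1 : Nn.card = 1 := le_antisymm (by omega) (Finset.card_pos.2 hNne)
    obtain ⟨k1, hk1⟩ := Finset.card_eq_one.1 hN1
    have hwk1 : w k1 = - ∑ e ∈ P, w e := by
      rw [← hνneg, hk1, Finset.sum_singleton]
    have hwk1neg : w k1 < 0 := by
      have hmem : k1 ∈ Nn := by rw [hk1]; exact Finset.mem_singleton_self k1
      exact (Finset.mem_filter.1 hmem).2
    have hval : (∑ e ∈ P, w e)⁻¹ • ∑ e ∈ P, w e • f e = f k1 := by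
      have h1 : ∑ e ∈ P, w e • f e = (∑ e ∈ P, w e) • f k1 := by
        have h2 : ∑ e ∈ Nn, w e • f e = w k1 • f k1 := by rw [hk1, Finset.sum_singleton]
        have h3 : ∑ e ∈ P, w e • f e = - (w k1 • f k1) := by
          rw [← h2, eq_neg_iff_add_eq_zero]; exact hvP
        rw [h3, hwk1]
        module
      rw [h1, inv_smul_smul₀ (ne_of_gt hσpos)]
    have hmem : f k1 ∈ convexHull ℝ ((S.erase (f k1) : Finset (ℝ × ℝ)) : Set (ℝ × ℝ)) := by
      have hmm := mem_hull_of_index_sum P f w (S.erase (f k1)) ?_ ?_ rfl hσpos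
      · rw [hval] at hmm; exact hmm
      · intro e he
        refine Finset.mem_erase.2 ⟨?_, hfS e⟩
        intro heq
        have hek1 : e = k1 := hfinj heq
        have : 0 < w e := (Finset.mem_filter.1 he).2
        rw [hek1] at this
        linarith
      · intro e he
        exact ((Finset.mem_filter.1 he).2).le
    exact hnr (f k1) (hfS k1) hmem
  have hdisj : Disjoint P Nn := by
    rw [Finset.disjoint_left]
    intro e heP heN
    have h1 : 0 < w e := (Finset.mem_filter.1 heP).2
    have h2 : w e < 0 := (Finset.mem_filter.1 heN).2
    linarith
  have hcard4 : P.card + Nn.card ≤ 4 := by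
    rw [← Finset.card_union_of_disjoint hdisj]
    calc (P ∪ Nn).card ≤ (Finset.univ : Finset (Fin 4)).card :=
          Finset.card_le_card (Finset.subset_univ _)
      _ = 4 := by simp
  obtain ⟨i, j, hij, hPij⟩ := Finset.card_eq_two.1 (by omega : P.card = 2)
  obtain ⟨k, l, hkl, hNkl⟩ := Finset.card_eq_two.1 (by omega : Nn.card = 2)
  have hiP : i ∈ P := by rw [hPij]; simp
  have hjP : j ∈ P := by rw [hPij]; simp
  have hkN : k ∈ Nn := by rw [hNkl]; simp
  have hlN : l ∈ Nn := by rw [hNkl]; simp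
  have hwi : 0 < w i := (Finset.mem_filter.1 hiP).2
  have hwj : 0 < w j := (Finset.mem_filter.1 hjP).2
  have hwk : w k < 0 := (Finset.mem_filter.1 hkN).2
  have hwl : w l < 0 := (Finset.mem_filter.1 hlN).2
  have hσval : (∑ e ∈ P, w e) = w i + w j := by rw [hPij, Finset.sum_pair hij]
  have hνval : w k + w l = - ∑ e ∈ P, w e := by
    rw [← hνneg, hNkl, Finset.sum_pair hkl]
  have hfij : f i ≠ f j := fun h => hij (hfinj h)
  have hfik : f i ≠ f k := fun h => (Finset.disjoint_left.1 hdisj hiP) ((hfinj h) ▸ hkN)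
  have hfjk : f j ≠ f k := fun h => (Finset.disjoint_left.1 hdisj hjP) ((hfinj h) ▸ hkN)
  have hfil : f i ≠ f l := fun h => (Finset.disjoint_left.1 hdisj hiP) ((hfinj h) ▸ hlN)
  have hfjl : f j ≠ f l := fun h => (Finset.disjoint_left.1 hdisj hjP) ((hfinj h) ▸ hlN)
  set σ := ∑ e ∈ P, w e with hσdef
  set z := σ⁻¹ • ∑ e ∈ P, w e • f e with hz
  have hrepP : z = (σ⁻¹ * w i) • f i + (σ⁻¹ * w j) • f j := by
    rw [hz, hPij, Finset.sum_pair hij, smul_add, smul_smul, smul_smul]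
  have hrepN : z = (σ⁻¹ * (-w k)) • f k + (σ⁻¹ * (-w l)) • f l := by
    have hv : ∑ e ∈ P, w e • f e = (-w k) • f k + (-w l) • f l := by
      have h2 : ∑ e ∈ Nn, w e • f e = w k • f k + w l • f l := by
        rw [hNkl, Finset.sum_pair hkl]
      have h3 : ∑ e ∈ P, w e • f e = - (w k • f k + w l • f l) := by
        rw [← h2, eq_neg_iff_add_eq_zero]; exact hvP
      rw [h3]; module
    rw [hz, hv, smul_add, smul_smul, smul_smul]
  have habsum : σ⁻¹ * w i + σ⁻¹ * w j = 1 := by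
    rw [← mul_add, ← hσval, inv_mul_cancel₀ (ne_of_gt hσpos)]
  have habsum2 : σ⁻¹ * (-w k) + σ⁻¹ * (-w l) = 1 := by
    have h2 : -w k + -w l = σ := by rw [hσdef]; linarith [hνval]
    rw [← mul_add, h2, inv_mul_cancel₀ (ne_of_gt hσpos)]
  have hgz0 : gfun (f i) (f j) z = 0 := by
    rw [hrepP, gfun_comb2 _ _ _ _ habsum, gfun_self, gfun_snd, mul_zero, mul_zero, add_zero]
  have hgzN : (σ⁻¹ * (-w k)) * gfun (f i) (f j) (f k)
      + (σ⁻¹ * (-w l)) * gfun (f i) (f j) (f l) = 0 := by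
    rw [← gfun_comb2 _ _ _ _ habsum2, ← hrepN, hgz0]
  have hco1 : 0 < σ⁻¹ * (-w k) := mul_pos (inv_pos.2 hσpos) (by linarith)
  have hco2 : 0 < σ⁻¹ * (-w l) := mul_pos (inv_pos.2 hσpos) (by linarith)
  have hknz : gfun (f i) (f j) (f k) ≠ 0 := by
    intro h0
    exact collinear_contra S hnr (hfS i) (hfS j) (hfS k) hfij hfik hfjk h0
  rcases lt_or_gt_of_ne hknz with hneg | hpos
  · have hlp : 0 < gfun (f i) (f j) (f l) := by nlinarith
    exact ⟨f i, hfS i, f j, hfS j, f k, hfS k, f l, hfS l, hfij, hneg, hlp⟩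
  · have hln : gfun (f i) (f j) (f l) < 0 := by nlinarith
    exact ⟨f i, hfS i, f j, hfS j, f l, hfS l, f k, hfS k, hfij, hln, hpos⟩

lemma main_ind (n : ℕ) : ∀ S : Finset (ℝ × ℝ), S.card ≤ n →
    (∀ q ∈ S, ∃ z : ℤ × ℤ, ((z.1 : ℝ), (z.2 : ℝ)) = q) →
    ∃ m : ℤ, 2 * (volume (convexHull ℝ (S : Set (ℝ × ℝ)))).toReal = (m : ℝ) := by
  induction n with
  | zero =>
    intro S hc _
    have : S = ∅ := Finset.card_eq_zero.1 (le_antisymm hc (Nat.zero_le _))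
    refine ⟨0, ?_⟩
    rw [this]
    simp
  | succ n ih =>
    intro S hc hlat
    by_cases hrem : ∃ d ∈ S, d ∈ convexHull ℝ ((S.erase d : Finset (ℝ × ℝ)) : Set (ℝ × ℝ))
    · obtain ⟨d, hdS, hd⟩ := hrem
      rw [hull_erase S d hdS hd]
      exact ih (S.erase d) (by rw [Finset.card_erase_of_mem hdS]; omega)
        (fun q hq => hlat q (Finset.mem_of_mem_erase hq))
    · push_neg at hrem
      rcases le_or_gt S.card 2 with hcard2 | hcard3
      · -- at most two points: null
        obtain ⟨u, v, hsub⟩ : ∃ u v : ℝ × ℝ, (S : Set (ℝ × ℝ)) ⊆ {u, v} := by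
          rcases Finset.eq_empty_or_nonempty S with rfl | ⟨u, hu⟩
          · exact ⟨0, 0, by simp⟩
          rcases Finset.eq_empty_or_nonempty (S.erase u) with he | ⟨v, hv⟩
          · refine ⟨u, u, fun x hx => ?_⟩
            left
            by_contra hne
            exact (Finset.notMem_empty x) (he ▸ Finset.mem_erase.2 ⟨hne, Finset.mem_coe.1 hx⟩)
          · refine ⟨u, v, fun x hx => ?_⟩
            rcases eq_or_ne x u with rfl | hne
            · exact Or.inl rfl
            · right
              have hcard1 : (S.erase u).card ≤ 1 := by
                rw [Finset.card_erase_of_mem hu]; omega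
              exact Finset.card_le_one.1 hcard1 x
                (Finset.mem_erase.2 ⟨hne, Finset.mem_coe.1 hx⟩) v hv
        refine ⟨0, ?_⟩
        have hnull : volume (convexHull ℝ (S : Set (ℝ × ℝ))) = 0 := by
          refine null_span_pair u v ?_
          refine (convexHull_subset_affineSpan (S : Set (ℝ × ℝ))).trans ?_
          exact_mod_cast affineSpan_mono ℝ hsub
        rw [hnull]
        simp
      rcases le_or_gt S.card 3 with hcard3' | hcard4
      · -- exactly three points
        have h3 : S.card = 3 := le_antisymm hcard3' hcard3
        obtain ⟨a, b, c, hab, hac, hbc, rfl⟩ := Finset.card_eq_three.1 h3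
        have hset : ((({a, b, c} : Finset (ℝ × ℝ))) : Set (ℝ × ℝ)) = {a, b, c} := by simp
        rw [hset, volume_hull_triple a b c]
        obtain ⟨za, hza⟩ := hlat a (by simp)
        obtain ⟨zb, hzb⟩ := hlat b (by simp)
        obtain ⟨zc, hzc⟩ := hlat c (by simp)
        refine ⟨|(zb.1 - za.1) * (zc.2 - za.2) - (zb.2 - za.2) * (zc.1 - za.1)|, ?_⟩
        rw [ENNReal.toReal_ofReal (by positivity)]
        rw [← hza, ← hzb, ← hzc]
        rw [Int.cast_abs]
        push_cast
        ring
      · -- at least four points: split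
        obtain ⟨p1, hp1, p2, hp2, p3, hp3, p4, hp4, hne, hg3, hg4⟩ :=
          exists_split S hrem (by omega)
        set Sp := S.filter (fun y => 0 ≤ gfun p1 p2 y) with hSp
        set Sm := S.filter (fun y => gfun p1 p2 y ≤ 0) with hSm
        have hsplit := hull_split p1 p2 hne S hrem hp1 hp2
        have hsub1 : convexHull ℝ (Sp : Set (ℝ × ℝ)) ⊆ convexHull ℝ (S : Set (ℝ × ℝ)) :=
          convexHull_mono (Finset.coe_subset.2 (Finset.filter_subset _ _))
        have hsub2 : convexHull ℝ (Sm : Set (ℝ × ℝ)) ⊆ convexHull ℝ (S : Set (ℝ × ℝ)) :=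
          convexHull_mono (Finset.coe_subset.2 (Finset.filter_subset _ _))
        have hunion : convexHull ℝ (S : Set (ℝ × ℝ)) =
            convexHull ℝ (Sp : Set (ℝ × ℝ)) ∪ convexHull ℝ (Sm : Set (ℝ × ℝ)) :=
          Subset.antisymm hsplit (union_subset hsub1 hsub2)
        have hp3n : p3 ∉ Sp := fun h => absurd (Finset.mem_filter.1 h).2 (not_le.2 hg3)
        have hp4n : p4 ∉ Sm := fun h => absurd (Finset.mem_filter.1 h).2 (not_le.2 hg4)
        have hcardp : Sp.card ≤ n := by
          have : Sp.card < S.card :=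
            Finset.card_lt_card ⟨Finset.filter_subset _ _, fun hss => hp3n (hss hp3)⟩
          omega
        have hcardm : Sm.card ≤ n := by
          have : Sm.card < S.card :=
            Finset.card_lt_card ⟨Finset.filter_subset _ _, fun hss => hp4n (hss hp4)⟩
          omega
        obtain ⟨m1, hm1⟩ := ih Sp hcardp (fun q hq => hlat q (Finset.filter_subset _ _ hq))
        obtain ⟨m2, hm2⟩ := ih Sm hcardm (fun q hq => hlat q (Finset.filter_subset _ _ hq))
        refine ⟨m1 + m2, ?_⟩
        -- halfplane containments
        have hhalf1 : convexHull ℝ (Sp : Set (ℝ × ℝ)) ⊆ {x : ℝ × ℝ | 0 ≤ gfun p1 p2 x} := by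
          refine convexHull_min ?_ ?_
          · intro x hx; exact (Finset.mem_filter.1 (Finset.mem_coe.1 hx)).2
          · have heq : {x : ℝ × ℝ | 0 ≤ gfun p1 p2 x}
                = {x : ℝ × ℝ | LL (p2 - p1) p1 ≤ LL (p2 - p1) x} := by
              ext x; simp [gfun, sub_nonneg]
            rw [heq]
            exact convex_halfSpace_ge (LinearMap.isLinear _) _
        have hhalf2 : convexHull ℝ (Sm : Set (ℝ × ℝ)) ⊆ {x : ℝ × ℝ | gfun p1 p2 x ≤ 0} := by
          refine convexHull_min ?_ ?_
          · intro x hx; exact (Finset.mem_filter.1 (Finset.mem_coe.1 hx)).2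
          · have heq : {x : ℝ × ℝ | gfun p1 p2 x ≤ 0}
                = {x : ℝ × ℝ | LL (p2 - p1) x ≤ LL (p2 - p1) p1} := by
              ext x; simp [gfun, sub_nonpos]
            rw [heq]
            exact convex_halfSpace_le (LinearMap.isLinear _) _
        have hinter : volume (convexHull ℝ (Sp : Set (ℝ × ℝ)) ∩
            convexHull ℝ (Sm : Set (ℝ × ℝ))) = 0 := by
          refine null_span_pair p1 p2 ?_
          intro x hx
          have hgx0 : gfun p1 p2 x = 0 :=
            le_antisymm (hhalf2 hx.2) (hhalf1 hx.1)
          obtain ⟨h1, h2⟩ := line_coord hne hgx0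
          refine mem_span_pair_of_comb
            (tf p1 p2 x / ((p2.1 - p1.1) ^ 2 + (p2.2 - p1.2) ^ 2)) ?_
          have hN := Npos hne
          ext
          · simp only [Prod.fst_add, Prod.smul_fst, smul_eq_mul]
            rw [h1]; field_simp; ring
          · simp only [Prod.snd_add, Prod.smul_snd, smul_eq_mul]
            rw [h2]; field_simp; ring
        have hcpt1 : IsCompact (convexHull ℝ (Sp : Set (ℝ × ℝ))) :=
          Sp.finite_toSet.isCompact_convexHull (𝕜 := ℝ)
        have hcpt2 : IsCompact (convexHull ℝ (Sm : Set (ℝ × ℝ))) :=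
          Sm.finite_toSet.isCompact_convexHull (𝕜 := ℝ)
        have hadd : volume (convexHull ℝ (S : Set (ℝ × ℝ)))
            = volume (convexHull ℝ (Sp : Set (ℝ × ℝ)))
              + volume (convexHull ℝ (Sm : Set (ℝ × ℝ))) := by
          rw [hunion]
          have := measure_union_add_inter (μ := volume)
            (convexHull ℝ (Sp : Set (ℝ × ℝ))) hcpt2.isClosed.measurableSet
          rw [hinter, add_zero] at this
          exact this
        rw [hadd, ENNReal.toReal_add hcpt1.measure_lt_top.ne hcpt2.measure_lt_top.ne]
        push_cast
        rw [← hm1, ← hm2]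
        ring


end LatticeHullHelpers

/-- **Half-integrality of lattice-polygon areas:** twice the area of the convex hull
of a finite set of lattice points is an integer. -/
theorem lattice_hull_area_half_integral (S : Finset (ℤ × ℤ))
    (K : Set (ℝ × ℝ)) (hK : K = convexHull ℝ (↑(S.image latticeEmbed) : Set (ℝ × ℝ))) :
    ∃ m : ℤ, 2 * (volume K).toReal = (m : ℝ) := by
  rw [hK]
  refine main_ind (S.image latticeEmbed).card (S.image latticeEmbed) le_rfl ?_
  intro q hq
  obtain ⟨z, _, hz⟩ := Finset.mem_image.1 hq
  exact ⟨z, hz⟩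
end
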